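/- arXiv:1405.6363 — 19 statements merged into one kernel-verified Lean document; each statement's English description precedes it below -/
import Mathlib

section
/- Let m be an even positive integer and let 𝒞 be the order m dimension n symmetric Cauchy tensor with generating vector c ∈ ℝ^n. Then 𝒞 is positive semi-definite if and only if c_i > 0 for every i ∈ {1,…,n}. -/
open MeasureTheory Real Finset

/-- An even order symmetric Cauchy tensor with generating vector `c`
is positive semi-definite iff every entry of `c` is positive. -/
theorem cauchy_tensor_psd_iff_generating_vector_pos
    (m n : ℕ) (hm : 0 < m) (hme : Even m) (c : Fin n → ℝ)
    (hc : ∀ i : Fin m → Fin n, (∑ j, c (i j)) ≠ 0) :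
    (∀ x : Fin n → ℝ,
        0 ≤ ∑ i : Fin m → Fin n, (∏ j, x (i j)) / (∑ j, c (i j))) ↔
      (∀ i, 0 < c i) := by
  constructor
  · intro h k
    have hx := h (fun j => if j = k then 1 else 0)
    have hsum : ∑ i : Fin m → Fin n,
        (∏ j, (if i j = k then (1:ℝ) else 0)) / (∑ j, c (i j))
        = 1 / (m * c k) := by
      rw [Fintype.sum_eq_single (fun _ => k)]
      · simp [Finset.sum_const, nsmul_eq_mul]
      · intro i hi
        obtain ⟨j, hj⟩ : ∃ j, i j ≠ k := by
          by_contra hcon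
          push_neg at hcon
          exact hi (funext hcon)
        rw [Finset.prod_eq_zero (Finset.mem_univ j) (by simp [hj]), zero_div]
    rw [hsum] at hx
    have hne : (m : ℝ) * c k ≠ 0 := by
      have := hc (fun _ => k)
      simpa [Finset.sum_const, nsmul_eq_mul] using this
    have hpos : 0 < (m : ℝ) * c k := by
      rcases lt_or_gt_of_ne hne.symm with h1 | h1
      · exact h1
      · exfalso
        have : 1 / ((m:ℝ) * c k) < 0 := div_neg_of_pos_of_neg one_pos h1
        linarith
    have hmpos : (0:ℝ) < m := by exact_mod_cast hm
    nlinarith [mul_pos hmpos hpos]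
  · intro hcp x
    set s : (Fin m → Fin n) → ℝ := fun i => ∑ j, c (i j) with hs
    have hspos : ∀ i, 0 < s i := fun i =>
      Finset.sum_pos (fun j _ => hcp (i j)) (by haveI : Nonempty (Fin m) := Fin.pos_iff_nonempty.mp hm; exact Finset.univ_nonempty)
    -- each term equals an interval integral
    have key : ∀ i : Fin m → Fin n,
        (∏ j, x (i j)) / s i
          = ∫ t in (0:ℝ)..1, (∏ j, x (i j)) * t ^ (s i - 1) := by
      intro i
      rw [intervalIntegral.integral_const_mul]
      rw [integral_rpow (Or.inl (by linarith [hspos i]))]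
      rw [Real.one_rpow, Real.zero_rpow (by linarith [hspos i])]
      field_simp
      rw [sub_zero, mul_one, sub_add_cancel]
    have hintg : ∀ i : Fin m → Fin n,
        IntervalIntegrable (fun t : ℝ => (∏ j, x (i j)) * t ^ (s i - 1))
          volume 0 1 := fun i =>
      (intervalIntegral.intervalIntegrable_rpow' (by linarith [hspos i])).const_mul _
    calc (0:ℝ) ≤ ∫ t in (0:ℝ)..1,
          ∑ i : Fin m → Fin n, (∏ j, x (i j)) * t ^ (s i - 1) := by
          rw [intervalIntegral.integral_of_le (by norm_num)]
          apply setIntegral_nonneg measurableSet_Ioc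
          intro t ht
          have ht0 : (0:ℝ) < t := ht.1
          have : ∑ i : Fin m → Fin n, (∏ j, x (i j)) * t ^ (s i - 1)
              = (∑ k, x k * t ^ (c k - 1/m)) ^ m := by
            rw [Finset.sum_pow' Finset.univ (fun k => x k * t ^ (c k - 1/m)) m]
            rw [Fintype.piFinset_univ]
            apply Finset.sum_congr rfl
            intro i _
            rw [Finset.prod_mul_distrib]
            congr 1
            rw [← Real.rpow_sum_of_pos ht0]
            congr 1
            rw [Finset.sum_sub_distrib, Finset.sum_const, Finset.card_univ,
              Fintype.card_fin, nsmul_eq_mul]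
            have : (m:ℝ) ≠ 0 := by positivity
            field_simp [hs]
            rfl
          rw [this]
          exact hme.pow_nonneg _
      _ = ∑ i : Fin m → Fin n, (∏ j, x (i j)) / s i := by
          rw [intervalIntegral.integral_finset_sum (fun i _ => hintg i)]
          exact Finset.sum_congr rfl fun i _ => (key i).symm
end

section
/- Let m be an even positive integer and let 𝒞 be the order m dimension n symmetric Cauchy tensor with generating vector c ∈ ℝ^n. Then 𝒞 is negative semi-definite (i.e., 𝒞x^m ≤ 0 for all x ∈ ℝ^n) if and only if c_i < 0 for every i ∈ {1,…,n}. -/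
open MeasureTheory Set Real

private lemma cauchy_exp_int (b : ℝ) (hb : 0 < b) :
    ∫ t in Ioi (0:ℝ), Real.exp (-(b * t)) = 1 / b := by
  have h : ∀ x ∈ Ioi (0:ℝ), HasDerivAt (fun a ↦ -(1/b) * Real.exp (-(b*a)))
      (Real.exp (-(b*x))) x := by
    intro x _
    have := (((hasDerivAt_id x).const_mul (-b)).exp.const_mul (-(1/b)))
    simp only [neg_mul, id_eq, mul_one] at this ⊢
    convert this using 1
    case e'_9 => field_simp
    all_goals rfl
  have hcont : ContinuousWithinAt (fun a ↦ -(1/b) * Real.exp (-(b*a))) (Ici (0:ℝ)) 0 :=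
    (Continuous.continuousWithinAt (by continuity))
  have hint : IntegrableOn (fun t ↦ Real.exp (-(b*t))) (Ioi (0:ℝ)) := by
    simpa [neg_mul] using exp_neg_integrableOn_Ioi 0 hb
  have htend : Filter.Tendsto (fun a ↦ -(1/b) * Real.exp (-(b*a))) Filter.atTop (nhds 0) := by
    have : Filter.Tendsto (fun a : ℝ ↦ Real.exp (-(b*a))) Filter.atTop (nhds 0) := by
      simpa [neg_mul] using Real.tendsto_exp_comp_nhds_zero.mpr
        (Filter.Tendsto.const_mul_atTop_of_neg (neg_neg_iff_pos.mpr hb) Filter.tendsto_id)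
    simpa using this.const_mul (-(1/b))
  have := integral_Ioi_of_hasDerivAt_of_tendsto hcont h hint htend
  simp at this
  rw [this]; field_simp

/-- An even order symmetric Cauchy tensor with generating vector `c`
is negative semi-definite iff every entry of `c` is negative. -/
theorem cauchy_tensor_nsd_iff_generating_vector_neg
    (m n : ℕ) (hm : 0 < m) (hme : Even m) (c : Fin n → ℝ)
    (hc : ∀ i : Fin m → Fin n, (∑ j, c (i j)) ≠ 0) :
    (∀ x : Fin n → ℝ,
        (∑ i : Fin m → Fin n, (∏ j, x (i j)) / (∑ j, c (i j))) ≤ 0) ↔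
      (∀ i, c i < 0) := by
  have hmne : Nonempty (Fin m) := ⟨⟨0, hm⟩⟩
  constructor
  · intro h k
    have hx := h (Pi.single k 1)
    have hsum : (∑ i : Fin m → Fin n, (∏ j, (Pi.single k 1 : Fin n → ℝ) (i j)) / (∑ j, c (i j)))
        = 1 / ((m : ℝ) * c k) := by
      rw [Finset.sum_eq_single (fun _ : Fin m ↦ k)]
      · simp [Finset.sum_const, nsmul_eq_mul]
      · intro i _ hi
        have : ∃ j, i j ≠ k := by
          by_contra hcon
          push_neg at hcon
          exact hi (funext hcon)
        obtain ⟨j, hj⟩ := this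
        have : (∏ j', (Pi.single k 1 : Fin n → ℝ) (i j')) = 0 :=
          Finset.prod_eq_zero (f := fun j' ↦ (Pi.single k 1 : Fin n → ℝ) (i j'))
            (Finset.mem_univ j) (Pi.single_eq_of_ne hj 1)
        simp [this]
      · intro habs
        exact absurd (Finset.mem_univ _) habs
    rw [hsum] at hx
    have hne : (m : ℝ) * c k ≠ 0 := by
      have := hc (fun _ ↦ k)
      simpa [Finset.sum_const, nsmul_eq_mul] using this
    by_contra hcon
    push_neg at hcon
    have hck : 0 < c k := lt_of_le_of_ne hcon (fun habs ↦ hne (by rw [← habs]; ring))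
    have : 0 < 1 / ((m : ℝ) * c k) := by positivity
    linarith
  · intro hneg x
    have hs : ∀ i : Fin m → Fin n, (∑ j, c (i j)) < 0 := fun i ↦
      Finset.sum_neg (fun j _ ↦ hneg (i j)) Finset.univ_nonempty
    -- integrability of each term
    have hint : ∀ i : Fin m → Fin n,
        IntegrableOn (fun t ↦ (∏ j, x (i j)) * Real.exp ((∑ j, c (i j)) * t)) (Ioi (0:ℝ)) := by
      intro i
      have h1 : IntegrableOn (fun t ↦ Real.exp (-((-(∑ j, c (i j))) * t))) (Ioi (0:ℝ)) := by
        simpa [neg_mul] using exp_neg_integrableOn_Ioi 0 (neg_pos.mpr (hs i))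
      have := h1.const_mul (∏ j, x (i j))
      simp only [neg_mul, neg_neg] at this
      exact this
    -- pointwise identity
    have hpt : ∀ t : ℝ, (∑ k, x k * Real.exp (c k * t)) ^ m
        = ∑ i : Fin m → Fin n, (∏ j, x (i j)) * Real.exp ((∑ j, c (i j)) * t) := by
      intro t
      rw [Finset.sum_pow' Finset.univ (fun k ↦ x k * Real.exp (c k * t)) m]
      rw [Fintype.piFinset_univ]
      refine Finset.sum_congr rfl fun i _ ↦ ?_
      rw [Finset.prod_mul_distrib, ← Real.exp_sum, Finset.sum_mul]
    -- compute the integral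
    have hinteq : ∫ t in Ioi (0:ℝ), (∑ k, x k * Real.exp (c k * t)) ^ m
        = -(∑ i : Fin m → Fin n, (∏ j, x (i j)) / (∑ j, c (i j))) := by
      rw [MeasureTheory.setIntegral_congr_fun measurableSet_Ioi
        (fun t _ ↦ hpt t)]
      rw [MeasureTheory.integral_finset_sum _ (fun i _ ↦ hint i)]
      rw [← Finset.sum_neg_distrib]
      refine Finset.sum_congr rfl fun i _ ↦ ?_
      rw [MeasureTheory.integral_const_mul]
      have : ∫ t in Ioi (0:ℝ), Real.exp ((∑ j, c (i j)) * t)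
          = 1 / (-(∑ j, c (i j))) := by
        have := cauchy_exp_int (-(∑ j, c (i j))) (neg_pos.mpr (hs i))
        simpa [neg_mul, neg_neg] using this
      rw [this]
      ring
    have hnonneg : 0 ≤ ∫ t in Ioi (0:ℝ), (∑ k, x k * Real.exp (c k * t)) ^ m :=
      MeasureTheory.integral_nonneg fun t ↦ hme.pow_nonneg _
    rw [hinteq] at hnonneg
    linarith
end

section
/- Let m be an even positive integer and let 𝒞 be the order m dimension n symmetric Cauchy tensor with generating vector c ∈ ℝ^n. Then 𝒞 is not positive semi-definite if and only if there exists an index i ∈ {1,…,n} with c_i < 0. -/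
/-- An even order symmetric Cauchy tensor is not positive semi-definite
iff its generating vector has at least one negative entry. -/
theorem cauchy_tensor_not_psd_iff_exists_neg_entry
    (m n : ℕ) (hm : 0 < m) (hme : Even m) (c : Fin n → ℝ)
    (hc : ∀ i : Fin m → Fin n, (∑ j, c (i j)) ≠ 0) :
    (¬ ∀ x : Fin n → ℝ,
        0 ≤ ∑ i : Fin m → Fin n, (∏ j, x (i j)) / (∑ j, c (i j))) ↔
      (∃ i, c i < 0) := by
  haveI : NeZero m := ⟨hm.ne'⟩
  constructor
  · intro hnpsd
    by_contra hneg
    push_neg at hneg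
    apply hnpsd
    intro x
    have hcpos : ∀ i, 0 < c i := by
      intro i
      have h := hc (fun _ => i)
      simp only [Finset.sum_const, Finset.card_univ, Fintype.card_fin, nsmul_eq_mul] at h
      rcases (hneg i).lt_or_eq with h' | h'
      · exact h'
      · exact absurd (by rw [← h', mul_zero]) h
    have hsumpos : ∀ f : Fin m → Fin n, (0:ℝ) < ∑ j, c (f j) := fun f =>
      Finset.sum_pos (fun j _ => hcpos _) Finset.univ_nonempty
    -- each term is an integral
    have key : ∀ f : Fin m → Fin n, (∏ j, x (f j)) / (∑ j, c (f j)) =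
        ∫ t in (0:ℝ)..1, (∏ j, x (f j)) * t ^ ((∑ j, c (f j)) - 1) := by
      intro f
      rw [intervalIntegral.integral_const_mul, integral_rpow (Or.inl (by linarith [hsumpos f]))]
      rw [sub_add_cancel, Real.one_rpow, Real.zero_rpow (hsumpos f).ne']
      field_simp
      ring
    calc (0:ℝ) ≤ ∫ t in (0:ℝ)..1, (∑ i, x i * t ^ (c i - 1/(m:ℝ))) ^ m := by
          apply intervalIntegral.integral_nonneg zero_le_one
          intro u _
          exact hme.pow_nonneg _
      _ = ∫ t in (0:ℝ)..1, ∑ f : Fin m → Fin n, (∏ j, x (f j)) * t ^ ((∑ j, c (f j)) - 1) := by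
          apply intervalIntegral.integral_congr_ae
          filter_upwards with t ht
          rw [Set.uIoc_of_le zero_le_one] at ht
          have ht0 : 0 < t := ht.1
          rw [Fintype.sum_pow]
          refine Finset.sum_congr rfl fun f _ => ?_
          rw [Finset.prod_mul_distrib, ← Real.rpow_sum_of_pos ht0]
          congr 1
          rw [Finset.sum_sub_distrib, Finset.sum_const, Finset.card_univ, Fintype.card_fin,
            nsmul_eq_mul, mul_one_div, div_self (by exact_mod_cast hm.ne' : (m:ℝ) ≠ 0)]
      _ = ∑ f : Fin m → Fin n, ∫ t in (0:ℝ)..1, (∏ j, x (f j)) * t ^ ((∑ j, c (f j)) - 1) := by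
          apply intervalIntegral.integral_finset_sum
          intro f _
          exact (intervalIntegral.intervalIntegrable_rpow'
            (by linarith [hsumpos f])).const_mul _
      _ = ∑ f : Fin m → Fin n, (∏ j, x (f j)) / (∑ j, c (f j)) := by
          exact Finset.sum_congr rfl fun f _ => (key f).symm
  · rintro ⟨i, hi⟩ hpsd
    have hx := hpsd (fun j => if j = i then (1:ℝ) else 0)
    have heq : ∑ f : Fin m → Fin n,
        (∏ j, (if f j = i then (1:ℝ) else 0)) / (∑ j, c (f j)) = 1 / ((m:ℝ) * c i) := by
      rw [Fintype.sum_eq_single (fun _ => i)]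
      · simp [Finset.sum_const]
      · intro f hf
        have : ∃ j, f j ≠ i := by
          by_contra h
          push_neg at h
          exact hf (funext h)
        obtain ⟨j, hj⟩ := this
        rw [Finset.prod_eq_zero (Finset.mem_univ j) (show (if f j = i then (1:ℝ) else 0) = 0 from if_neg hj), zero_div]
    rw [heq] at hx
    have : (m:ℝ) * c i < 0 :=
      mul_neg_of_pos_of_neg (by exact_mod_cast hm) hi
    have := one_div_neg.mpr this
    linarith
end

section
/- Let m be an even positive integer and let 𝒞 be the order m dimension n symmetric Cauchy tensor with generating vector c ∈ ℝ^n satisfying c_i > 0 for all i. If λ ∈ ℝ and x ∈ ℝ^n with x ≠ 0 satisfy the H-eigenvalue equation Σ_{i_2,…,i_m=1}^n x_{i_2}⋯x_{i_m}/(c_i + c_{i_2}+⋯+c_{i_m}) = λ x_i^{m-1} for every i ∈ {1,…,n}, then λ ≥ 0. -/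
open MeasureTheory intervalIntegral in
/-- Every H-eigenvalue of an even order symmetric Cauchy tensor with
positive generating vector is nonnegative. -/
theorem cauchy_tensor_H_eigenvalue_nonneg
    (m n : ℕ) (hm : 0 < m) (hme : Even m) (c : Fin n → ℝ)
    (hc : ∀ i, 0 < c i)
    (lam : ℝ) (x : Fin n → ℝ) (hx : x ≠ 0)
    (heig : ∀ i : Fin n,
        (∑ t : Fin (m - 1) → Fin n, (∏ j, x (t j)) / (c i + ∑ j, c (t j)))
          = lam * (x i) ^ (m - 1)) :
    0 ≤ lam := by
  obtain ⟨k, rfl⟩ : ∃ k, m = k + 1 := ⟨m - 1, (Nat.succ_pred_eq_of_pos hm).symm⟩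
  have heig' : ∀ i : Fin n,
      (∑ t : Fin k → Fin n, (∏ j, x (t j)) / (c i + ∑ j, c (t j)))
        = lam * (x i) ^ k := heig
  have hcs : ∀ s : Fin (k+1) → Fin n, 0 < ∑ j, c (s j) := fun s =>
    Finset.sum_pos (fun j _ => hc (s j)) ⟨0, Finset.mem_univ 0⟩
  set S := ∑ s : Fin (k+1) → Fin n, (∏ j, x (s j)) / (∑ j, c (s j)) with hSdef
  -- Step A : S = lam * ∑ i, x i ^ (k+1)
  have hA : S = lam * ∑ i, x i ^ (k + 1) := by
    have h1 : S = ∑ p : Fin n × (Fin k → Fin n),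
        (x p.1 * ∏ j, x (p.2 j)) / (c p.1 + ∑ j, c (p.2 j)) := by
      rw [hSdef, ← Equiv.sum_comp (Fin.consEquiv (fun _ => Fin n))]
      refine Fintype.sum_congr _ _ (fun p => ?_)
      simp [Fin.consEquiv, Fin.prod_univ_succ, Fin.sum_univ_succ]
    rw [h1, Fintype.sum_prod_type, Finset.mul_sum]
    refine Fintype.sum_congr _ _ (fun i => ?_)
    have h2 : ∑ t : Fin k → Fin n, (x i * ∏ j, x (t j)) / (c i + ∑ j, c (t j))
        = x i * ∑ t : Fin k → Fin n, (∏ j, x (t j)) / (c i + ∑ j, c (t j)) := by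
      rw [Finset.mul_sum]
      exact Fintype.sum_congr _ _ (fun t => by ring)
    rw [h2, heig' i]; ring
  -- Step B : 0 ≤ S via integral representation
  have hB : 0 ≤ S := by
    set e : ℝ := 1 / (k + 1) with he
    have hk1 : ((k : ℝ) + 1) ≠ 0 := by positivity
    have hterm : ∀ s : Fin (k+1) → Fin n,
        IntervalIntegrable (fun t : ℝ => (∏ j, x (s j)) * t ^ ((∑ j, c (s j)) - 1))
          volume 0 1 := fun s =>
      (intervalIntegrable_rpow' (by linarith [hcs s])).const_mul _
    have hint : ∀ s : Fin (k+1) → Fin n,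
        ∫ t in (0:ℝ)..1, (∏ j, x (s j)) * t ^ ((∑ j, c (s j)) - 1)
          = (∏ j, x (s j)) / (∑ j, c (s j)) := by
      intro s
      rw [intervalIntegral.integral_const_mul, integral_rpow (Or.inl (by linarith [hcs s]))]
      rw [sub_add_cancel, Real.one_rpow, Real.zero_rpow (ne_of_gt (hcs s))]
      ring
    have hgt : ∀ t : ℝ, 0 < t →
        (∑ s : Fin (k+1) → Fin n, (∏ j, x (s j)) * t ^ ((∑ j, c (s j)) - 1))
          = (∑ i, x i * t ^ (c i - e)) ^ (k + 1) := by
      intro t ht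
      rw [Fintype.sum_pow]
      refine Fintype.sum_congr _ _ (fun s => ?_)
      rw [Finset.prod_mul_distrib]
      congr 1
      rw [← Real.rpow_sum_of_pos ht]
      congr 1
      rw [Finset.sum_sub_distrib, Finset.sum_const, Finset.card_univ, Fintype.card_fin]
      rw [he, nsmul_eq_mul]
      push_cast
      field_simp
    have hSint : S = ∫ t in (0:ℝ)..1, (∑ i, x i * t ^ (c i - e)) ^ (k + 1) := by
      rw [hSdef, ← Fintype.sum_congr _ _ hint, ← intervalIntegral.integral_finset_sum
        (fun s _ => hterm s)]
      refine intervalIntegral.integral_congr_ae (Filter.Eventually.of_forall (fun t ht => ?_))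
      rw [Set.uIoc_of_le (by norm_num : (0:ℝ) ≤ 1)] at ht
      exact hgt t ht.1
    rw [hSint]
    refine intervalIntegral.integral_nonneg (by norm_num) (fun u _ => ?_)
    exact hme.pow_nonneg _
  -- conclude
  obtain ⟨i0, hi0⟩ := Function.ne_iff.mp hx
  have hP : 0 < ∑ i, x i ^ (k + 1) := by
    refine Finset.sum_pos' (fun i _ => hme.pow_nonneg _) ⟨i0, Finset.mem_univ i0, ?_⟩
    exact hme.pow_pos hi0
  nlinarith [hA ▸ hB]
end

section
/- Let m be an even positive integer and let 𝒞 be the order m dimension n symmetric Cauchy tensor with generating vector c ∈ ℝ^n satisfying c_i > 0 for all i. If λ ∈ ℝ and x ∈ ℝ^n satisfy the Z-eigenvalue system Σ_{i_2,…,i_m=1}^n x_{i_2}⋯x_{i_m}/(c_i + c_{i_2}+⋯+c_{i_m}) = λ x_i for every i ∈ {1,…,n} together with xᵀx = 1, then λ ≥ 0. -/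
open MeasureTheory intervalIntegral Real

/-- Every Z-eigenvalue of an even order symmetric Cauchy tensor with
positive generating vector is nonnegative. -/
theorem cauchy_tensor_Z_eigenvalue_nonneg
    (m n : ℕ) (hm : 0 < m) (hme : Even m) (c : Fin n → ℝ)
    (hc : ∀ i, 0 < c i)
    (lam : ℝ) (x : Fin n → ℝ)
    (hnorm : (∑ i, (x i) ^ 2) = 1)
    (heig : ∀ i : Fin n,
        (∑ t : Fin (m - 1) → Fin n, (∏ j, x (t j)) / (c i + ∑ j, c (t j)))
          = lam * x i) :
    0 ≤ lam := by
  obtain ⟨k, rfl⟩ : ∃ k, m = k + 1 := ⟨m - 1, (Nat.succ_pred_eq_of_pos hm).symm⟩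
  have heig' : ∀ i : Fin n,
      (∑ t : Fin k → Fin n, (∏ j, x (t j)) / (c i + ∑ j, c (t j))) = lam * x i :=
    heig
  -- sums of c over tuples are positive
  have hS : ∀ s : Fin (k + 1) → Fin n, 0 < ∑ j, c (s j) := fun s =>
    Finset.sum_pos (fun j _ => hc (s j)) Finset.univ_nonempty
  -- Step 1 : lam = sum over all (k+1)-tuples
  have key : lam = ∑ s : Fin (k + 1) → Fin n,
      (∏ j, x (s j)) / (∑ j, c (s j)) := by
    calc lam = lam * ∑ i, (x i) ^ 2 := by rw [hnorm, mul_one]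
    _ = ∑ i, x i * (lam * x i) := by rw [Finset.mul_sum]; congr 1; ext i; ring
    _ = ∑ i, x i * ∑ t : Fin k → Fin n, (∏ j, x (t j)) / (c i + ∑ j, c (t j)) := by
        congr 1; ext i; rw [heig' i]
    _ = ∑ i, ∑ t : Fin k → Fin n,
          (x i * ∏ j, x (t j)) / (c i + ∑ j, c (t j)) := by
        congr 1; ext i; rw [Finset.mul_sum]; congr 1; ext t; ring
    _ = ∑ s : Fin (k + 1) → Fin n, (∏ j, x (s j)) / (∑ j, c (s j)) := by
        rw [← Fintype.sum_prod_type']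
        apply Fintype.sum_equiv (Fin.consEquiv fun _ => Fin n)
        intro p
        simp [Fin.consEquiv, Fin.prod_univ_succ, Fin.sum_univ_succ]
  -- Step 2: each term is an integral
  have int_eq : ∀ s : Fin (k + 1) → Fin n,
      (∏ j, x (s j)) / (∑ j, c (s j)) =
        ∫ t in (0:ℝ)..1, (∏ j, x (s j)) * t ^ ((∑ j, c (s j)) - 1) := by
    intro s
    rw [intervalIntegral.integral_const_mul, integral_rpow (Or.inl (by linarith [hS s]))]
    rw [sub_add_cancel]
    rw [Real.one_rpow, Real.zero_rpow (hS s).ne']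
    ring
  -- integrability of each term
  have hint : ∀ s : Fin (k + 1) → Fin n, IntervalIntegrable
      (fun t : ℝ => (∏ j, x (s j)) * t ^ ((∑ j, c (s j)) - 1)) volume 0 1 :=
    fun s => (intervalIntegrable_rpow' (by linarith [hS s])).const_mul _
  -- Step 3: lam as a single integral
  have key2 : lam = ∫ t in (0:ℝ)..1,
      ∑ s : Fin (k + 1) → Fin n, (∏ j, x (s j)) * t ^ ((∑ j, c (s j)) - 1) := by
    rw [key, intervalIntegral.integral_finset_sum (fun s _ => hint s)]
    exact Finset.sum_congr rfl fun s _ => int_eq s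
  rw [key2]
  -- Step 4: the integrand is a.e. nonnegative on [0,1]
  apply intervalIntegral.integral_nonneg_of_ae_restrict zero_le_one
  have h1 : ∀ᵐ t ∂(volume.restrict (Set.Icc (0:ℝ) 1)), t ∈ Set.Icc (0:ℝ) 1 :=
    ae_restrict_mem measurableSet_Icc
  have h2 : ∀ᵐ t ∂(volume.restrict (Set.Icc (0:ℝ) 1)), t ≠ 0 := by
    rw [ae_iff]
    have he : {t : ℝ | ¬ t ≠ 0} = {0} := by ext t; simp
    rw [he, Measure.restrict_apply (measurableSet_singleton 0)]
    exact measure_mono_null Set.inter_subset_left (measure_singleton 0)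
  filter_upwards [h1, h2] with t ht hne
  have ht0 : 0 < t := lt_of_le_of_ne ht.1 (Ne.symm hne)
  have hterm : ∀ s : Fin (k + 1) → Fin n,
      (∏ j, x (s j)) * t ^ ((∑ j, c (s j)) - 1) =
        (∏ j, x (s j) * t ^ (c (s j))) * t⁻¹ := by
    intro s
    rw [Real.rpow_sub ht0, Real.rpow_one, Real.rpow_sum_of_pos ht0,
      Finset.prod_mul_distrib]
    ring
  calc (0:ℝ) ≤ (∑ i, x i * t ^ (c i)) ^ (k + 1) * t⁻¹ :=
        mul_nonneg (hme.pow_nonneg _) (inv_nonneg.2 ht0.le)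
  _ = ∑ s : Fin (k + 1) → Fin n, (∏ j, x (s j)) * t ^ ((∑ j, c (s j)) - 1) := by
      rw [Fintype.sum_pow, Finset.sum_mul]
      exact (Finset.sum_congr rfl fun s _ => (hterm s)).symm
end

section
/- Let m be an even positive integer and let 𝒞 be the order m dimension n symmetric Cauchy tensor with generating vector c ∈ ℝ^n. If c_1,…,c_n are positive and mutually distinct (c_i ≠ c_j for i ≠ j), then 𝒞 is positive definite. -/
open MeasureTheory Filter Set

/-- If the generating vector of an even order symmetric Cauchy tensor has
positive and mutually distinct entries, then the tensor is positive definite. -/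
theorem cauchy_tensor_pd_of_pos_distinct
    (m n : ℕ) (hm : 0 < m) (hme : Even m) (c : Fin n → ℝ)
    (hpos : ∀ i, 0 < c i)
    (hdist : ∀ i j, i ≠ j → c i ≠ c j) :
    ∀ x : Fin n → ℝ, x ≠ 0 →
      0 < ∑ i : Fin m → Fin n, (∏ j, x (i j)) / (∑ j, c (i j)) := by
  intro x hx
  set F : ℝ → ℝ := fun t => ∑ i : Fin m → Fin n, (∏ j, x (i j)) * t ^ (∑ j, c (i j) - 1)
    with hFdef
  -- positivity of exponent sums
  have hcs : ∀ i : Fin m → Fin n, 0 < ∑ j, c (i j) := fun i =>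
    Finset.sum_pos (fun j _ => hpos (i j)) ⟨⟨0, hm⟩, Finset.mem_univ _⟩
  have hr : ∀ i : Fin m → Fin n, (-1 : ℝ) < ∑ j, c (i j) - 1 := fun i => by
    have := hcs i; linarith
  have hInt : ∀ i : Fin m → Fin n,
      IntervalIntegrable (fun t : ℝ => (∏ j, x (i j)) * t ^ (∑ j, c (i j) - 1)) volume 0 1 :=
    fun i => (intervalIntegral.intervalIntegrable_rpow' (hr i)).const_mul _
  have hFInt : IntervalIntegrable F volume 0 1 := by
    have := IntervalIntegrable.sum (μ := volume) (a := (0:ℝ)) (b := 1) Finset.univ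
      (f := fun (i : Fin m → Fin n) (t : ℝ) => (∏ j, x (i j)) * t ^ (∑ j, c (i j) - 1))
      (fun i _ => hInt i)
    have heq : F = ∑ i : Fin m → Fin n,
        (fun t : ℝ => (∏ j, x (i j)) * t ^ (∑ j, c (i j) - 1)) := by
      funext t; simp [hFdef]
    rw [heq]; exact this
  -- the key integral identity
  have key : ∑ i : Fin m → Fin n, (∏ j, x (i j)) / (∑ j, c (i j))
      = ∫ t in (0:ℝ)..1, F t := by
    rw [hFdef]
    rw [intervalIntegral.integral_finset_sum (fun i _ => hInt i)]
    apply Finset.sum_congr rfl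
    intro i _
    rw [intervalIntegral.integral_const_mul, integral_rpow (Or.inl (hr i))]
    have h1 : (∑ j, c (i j) - 1) + 1 = ∑ j, c (i j) := by ring
    rw [h1, Real.one_rpow, Real.zero_rpow (hcs i).ne']
    rw [div_eq_mul_inv, div_eq_mul_inv]
    ring
  -- F t = (∑ k, x k * t ^ c k) ^ m / t  for t > 0
  have hFg : ∀ t : ℝ, 0 < t → F t = (∑ k, x k * t ^ c k) ^ m / t := by
    intro t ht
    rw [Fintype.sum_pow, Finset.sum_div, hFdef]
    apply Finset.sum_congr rfl
    intro i _
    rw [Finset.prod_mul_distrib, ← Real.rpow_sum_of_pos ht, Real.rpow_sub ht, Real.rpow_one]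
    ring
  -- find a point in (0,1) where the inner sum is nonzero
  obtain ⟨k₁, hk₁⟩ : ∃ k, x k ≠ 0 := by
    by_contra h; push_neg at h; exact hx (funext h)
  obtain ⟨k₀, hk₀mem, hk₀min⟩ :=
    Finset.exists_min_image (Finset.univ.filter fun k => x k ≠ 0) c
      ⟨k₁, by simp [hk₁]⟩
  have hxk₀ : x k₀ ≠ 0 := (Finset.mem_filter.mp hk₀mem).2
  have hlim : Tendsto (fun t : ℝ => ∑ k, x k * t ^ (c k - c k₀))
      (nhdsWithin 0 (Set.Ioi 0)) (nhds (x k₀)) := by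
    have hsum : (x k₀) = ∑ k, (if k = k₀ then x k₀ else 0) := by simp
    rw [hsum]
    apply tendsto_finset_sum
    intro k _
    by_cases hk : k = k₀
    · subst hk
      simp only [if_pos rfl, sub_self, Real.rpow_zero, mul_one]
      exact tendsto_const_nhds
    · rw [if_neg hk]
      by_cases hxk : x k = 0
      · simp only [hxk, zero_mul]; exact tendsto_const_nhds
      · have hle : c k₀ ≤ c k := hk₀min k (Finset.mem_filter.mpr ⟨Finset.mem_univ _, hxk⟩)
        have hne : c k ≠ c k₀ := hdist k k₀ hk
        have hp : 0 < c k - c k₀ := by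
          rcases lt_or_eq_of_le hle with h | h
          · linarith
          · exact absurd h.symm hne
        have h0 : Tendsto (fun t : ℝ => t ^ (c k - c k₀)) (nhds 0) (nhds 0) := by
          have := Real.continuousAt_rpow_const 0 (c k - c k₀) (Or.inr hp.le)
          have h00 : (0 : ℝ) ^ (c k - c k₀) = 0 := Real.zero_rpow hp.ne'
          simpa [ContinuousAt, h00] using this
        have h1 : Tendsto (fun t : ℝ => t ^ (c k - c k₀))
            (nhdsWithin 0 (Set.Ioi 0)) (nhds 0) :=
          h0.mono_left nhdsWithin_le_nhds
        have := h1.const_mul (x k)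
        simpa using this
  have hev1 : ∀ᶠ t in nhdsWithin (0:ℝ) (Set.Ioi 0),
      (∑ k, x k * t ^ (c k - c k₀)) ≠ 0 := hlim.eventually_ne hxk₀
  have hev2 : ∀ᶠ t in nhdsWithin (0:ℝ) (Set.Ioi 0), t ∈ Set.Ioo (0:ℝ) 1 :=
    Ioo_mem_nhdsGT_of_mem ⟨le_refl 0, one_pos⟩
  obtain ⟨t₀, hφ, ht₀⟩ := (hev1.and hev2).exists
  have ht₀1 : (0:ℝ) < t₀ := ht₀.1
  have hg0 : (∑ k, x k * t₀ ^ c k) ≠ 0 := by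
    have heq : ∑ k, x k * t₀ ^ c k = t₀ ^ c k₀ * ∑ k, x k * t₀ ^ (c k - c k₀) := by
      rw [Finset.mul_sum]
      apply Finset.sum_congr rfl
      intro k _
      rw [Real.rpow_sub ht₀1]
      have := (Real.rpow_pos_of_pos ht₀1 (c k₀)).ne'
      field_simp
    rw [heq]
    exact mul_ne_zero (Real.rpow_pos_of_pos ht₀1 _).ne' hφ
  have hFt₀ : 0 < F t₀ := by
    rw [hFg t₀ ht₀1]
    exact div_pos (hme.pow_pos hg0) ht₀1
  -- continuity of F at t₀
  have hFc : ContinuousAt F t₀ := by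
    have hterm : ∀ i : Fin m → Fin n,
        ContinuousAt (fun t : ℝ => (∏ j, x (i j)) * t ^ (∑ j, c (i j) - 1)) t₀ :=
      fun i => continuousAt_const.mul
        (Real.continuousAt_rpow_const t₀ _ (Or.inl ht₀1.ne'))
    exact tendsto_finset_sum _ (fun i _ => hterm i)
  -- a ball around t₀ where F is positive, inside (0,1)
  have hevF : ∀ᶠ t in nhds t₀, 0 < F t ∧ t ∈ Set.Ioo (0:ℝ) 1 :=
    (hFc.eventually (eventually_gt_nhds hFt₀)).and (isOpen_Ioo.mem_nhds ht₀)
  obtain ⟨ε, hε, hball⟩ := Metric.eventually_nhds_iff_ball.mp hevF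
  have hsupp : 0 < volume (Function.support F ∩ Set.Ioc (0:ℝ) 1) := by
    refine lt_of_lt_of_le (Metric.measure_ball_pos volume t₀ hε) (measure_mono ?_)
    intro y hy
    obtain ⟨h1, h2⟩ := hball y hy
    exact ⟨h1.ne', Set.Ioo_subset_Ioc_self h2⟩
  -- conclude
  rw [key, intervalIntegral.integral_of_le (by norm_num : (0:ℝ) ≤ 1)]
  rw [MeasureTheory.setIntegral_pos_iff_support_of_nonneg_ae ?_ ?_]
  · exact hsupp
  · filter_upwards [MeasureTheory.self_mem_ae_restrict measurableSet_Ioc] with t ht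
    rw [Pi.zero_apply, hFg t ht.1]
    exact div_nonneg (hme.pow_nonneg _) ht.1.le
  · exact hFInt.1
end

section
/- Let m be an even positive integer. The order m dimension n Hilbert tensor ℋ, with entries h_{i_1⋯i_m} = 1/(i_1 + i_2 + ⋯ + i_m − m + 1) for i_1,…,i_m ∈ {1,…,n}, is positive definite; that is, Σ_{i_1,…,i_m=1}^n x_{i_1}⋯x_{i_m}/(i_1+⋯+i_m−m+1) > 0 for every nonzero x ∈ ℝ^n. -/
open MeasureTheory intervalIntegral Set Function

/-- The even order Hilbert tensor, with entries
`1/(i₁ + ⋯ + i_m − m + 1)` for 1-based indices `i₁,…,i_m ∈ {1,…,n}`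
(equivalently `1/(i₁ + ⋯ + i_m + 1)` for 0-based indices), is positive definite. -/
theorem hilbert_tensor_positive_definite
    (m n : ℕ) (hm : 0 < m) (hme : Even m) :
    ∀ x : Fin n → ℝ, x ≠ 0 →
      0 < ∑ i : Fin m → Fin n,
            (∏ j, x (i j)) / ((∑ j, ((i j : ℕ) : ℝ)) + 1) := by
  intro x hx
  set f : ℝ → ℝ := fun t => ∑ k : Fin n, x k * t ^ (k : ℕ) with hf
  have hcont : Continuous f := by
    apply continuous_finset_sum
    intro k _
    exact continuous_const.mul (continuous_pow _)
  have hexp : ∀ t : ℝ, f t ^ m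
      = ∑ i : Fin m → Fin n, (∏ j, x (i j)) * t ^ (∑ j, (i j : ℕ)) := by
    intro t
    rw [hf]
    rw [Fintype.sum_pow (fun k : Fin n => x k * t ^ (k : ℕ)) m]
    refine Finset.sum_congr rfl fun i _ => ?_
    rw [Finset.prod_mul_distrib, Finset.prod_pow_eq_pow_sum]
  have key : (∑ i : Fin m → Fin n,
        (∏ j, x (i j)) / ((∑ j, ((i j : ℕ) : ℝ)) + 1))
      = ∫ t in (0:ℝ)..1, f t ^ m := by
    have : (∫ t in (0:ℝ)..1, f t ^ m)
        = ∫ t in (0:ℝ)..1, ∑ i : Fin m → Fin n,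
            (∏ j, x (i j)) * t ^ (∑ j, (i j : ℕ)) := by
      refine intervalIntegral.integral_congr fun t _ => hexp t
    rw [this, intervalIntegral.integral_finset_sum]
    · refine Finset.sum_congr rfl fun i _ => ?_
      rw [intervalIntegral.integral_const_mul, integral_pow, one_pow,
        zero_pow (Nat.succ_ne_zero _), sub_zero, mul_one_div]
      push_cast
      ring
    · intro i _
      exact (Continuous.intervalIntegrable (by continuity) _ _)
  rw [key]
  rw [intervalIntegral.integral_pos_iff_support_of_nonneg_ae]
  · refine ⟨one_pos, ?_⟩
    -- support of f^m contains Ioc 0 1 minus the finite root set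
    set P : Polynomial ℝ := ∑ k : Fin n, Polynomial.C (x k) * Polynomial.X ^ (k : ℕ) with hP
    have hPe : ∀ t, P.eval t = f t := by
      intro t; simp [hP, hf, Polynomial.eval_finset_sum]
    have hPne : P ≠ 0 := by
      intro h
      apply hx
      funext k
      have := congrArg (fun p => Polynomial.coeff p (k : ℕ)) h
      simp only [hP, Polynomial.finset_sum_coeff, Polynomial.coeff_C_mul,
        Polynomial.coeff_X_pow, Polynomial.coeff_zero] at this
      rw [Finset.sum_eq_single k] at this
      · simpa using this
      · intro b _ hb
        simp only [Fin.val_eq_val, mul_ite, mul_one, mul_zero, ite_eq_right_iff]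
        intro h; exact absurd h.symm hb
      · simp
    have hroots : {t : ℝ | f t = 0}.Finite := by
      have := Polynomial.finite_setOf_isRoot hPne
      refine this.subset ?_
      intro t ht
      simp only [mem_setOf_eq, Polynomial.IsRoot, hPe]
      exact ht
    have hsub : Ioc (0:ℝ) 1 \ {t | f t = 0} ⊆ support (fun t => f t ^ m) ∩ Ioc 0 1 := by
      rintro t ⟨ht1, ht2⟩
      refine ⟨?_, ht1⟩
      simp only [mem_support]
      exact pow_ne_zero _ (by simpa using ht2)
    calc (0:ENNReal) < 1 := by norm_num
      _ = volume (Ioc (0:ℝ) 1 \ {t | f t = 0}) := by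
          rw [measure_diff_null (hroots.measure_zero _)]
          simp
      _ ≤ volume (support (fun t => f t ^ m) ∩ Ioc 0 1) := measure_mono hsub
  · exact Filter.Eventually.of_forall fun t => hme.pow_nonneg _
  · exact ((hcont.pow m).intervalIntegrable _ _)
end

section
/- Let m be an even positive integer and let 𝒞 be the order m dimension n symmetric Cauchy tensor with generating vector c ∈ ℝ^n. Then 𝒞 is positive definite if and only if the entries c_1,…,c_n are positive and mutually distinct (c_i > 0 for all i and c_i ≠ c_j for i ≠ j). -/
open MeasureTheory Set Function Filter Topology intervalIntegral

/-- If `x ≠ 0` and the exponents `c i` are mutually distinct, then the generalized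
polynomial `t ↦ ∑ i, x i * t ^ c i` is nonzero somewhere on `(0, 1)`. -/
lemma cauchy_aux_exists_pt (n : ℕ) (c : Fin n → ℝ)
    (hdist : ∀ i j : Fin n, i ≠ j → c i ≠ c j)
    (x : Fin n → ℝ) (hx : x ≠ 0) :
    ∃ t₀ ∈ Ioo (0:ℝ) 1, (∑ i, x i * t₀ ^ (c i)) ≠ 0 := by
  classical
  obtain ⟨i₁, hi₁⟩ : ∃ i, x i ≠ 0 := Function.ne_iff.mp hx
  set S : Finset (Fin n) := Finset.univ.filter (fun i => x i ≠ 0) with hS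
  have hSne : S.Nonempty := ⟨i₁, by simp [hS, hi₁]⟩
  obtain ⟨i₀, hi₀S, hmin⟩ := S.exists_min_image c hSne
  have hxi₀ : x i₀ ≠ 0 := by simpa [hS] using hi₀S
  have htend : Tendsto (fun t : ℝ => ∑ i, x i * t ^ (c i - c i₀)) (𝓝[>] (0:ℝ))
      (𝓝 (x i₀)) := by
    have hval : x i₀ = ∑ i : Fin n, (if i = i₀ then x i₀ else 0) := by simp
    rw [hval]
    apply tendsto_finset_sum
    intro i _
    by_cases hii : i = i₀
    · subst hii
      simp only [if_pos rfl, sub_self, Real.rpow_zero, mul_one]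
      exact tendsto_const_nhds
    · simp only [if_neg hii]
      by_cases hxi : x i = 0
      · simp only [hxi, zero_mul]; exact tendsto_const_nhds
      · have hiS : i ∈ S := by simp [hS, hxi]
        have hp : 0 < c i - c i₀ := by
          have hle := hmin i hiS
          have hne : c i₀ ≠ c i := hdist i₀ i (fun h => hii h.symm)
          have := lt_of_le_of_ne hle hne
          linarith
        have h0 : Tendsto (fun t : ℝ => t ^ (c i - c i₀)) (𝓝[>] (0:ℝ)) (𝓝 0) := by
          have hcont := (Real.continuousAt_rpow_const 0 (c i - c i₀) (Or.inr hp.le)).tendsto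
          rw [Real.zero_rpow hp.ne'] at hcont
          exact hcont.mono_left nhdsWithin_le_nhds
        have := h0.const_mul (x i)
        rwa [mul_zero] at this
  have hev : ∀ᶠ t in 𝓝[>] (0:ℝ), (∑ i, x i * t ^ (c i - c i₀)) ≠ 0 :=
    htend.eventually_ne hxi₀
  have hmem : Ioo (0:ℝ) 1 ∈ 𝓝[>] (0:ℝ) := Ioo_mem_nhdsGT_of_mem ⟨le_refl 0, one_pos⟩
  obtain ⟨t₀, ht₀ne, ht₀mem⟩ := (hev.and (eventually_mem_set.mpr hmem)).exists
  refine ⟨t₀, ht₀mem, ?_⟩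
  have ht₀pos : 0 < t₀ := ht₀mem.1
  have : (∑ i, x i * t₀ ^ (c i)) = t₀ ^ (c i₀) * ∑ i, x i * t₀ ^ (c i - c i₀) := by
    rw [Finset.mul_sum]
    refine Finset.sum_congr rfl fun i _ => ?_
    rw [← mul_assoc, mul_comm (t₀ ^ c i₀), mul_assoc, ← Real.rpow_add ht₀pos]
    ring_nf
  rw [this]
  exact mul_ne_zero (Real.rpow_pos_of_pos ht₀pos _).ne' ht₀ne

/-- The hard ("if") direction: positivity of the Cauchy tensor form. -/
lemma cauchy_aux_pos (m n : ℕ) (hm : 0 < m) (hme : Even m) (c : Fin n → ℝ)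
    (hcpos : ∀ i, 0 < c i)
    (x : Fin n → ℝ)
    (ht₀ex : ∃ t₀ ∈ Ioo (0:ℝ) 1, (∑ i, x i * t₀ ^ (c i)) ≠ 0) :
    0 < ∑ i : Fin m → Fin n, (∏ j, x (i j)) / (∑ j, c (i j)) := by
  classical
  have hFinm : Nonempty (Fin m) := ⟨⟨0, hm⟩⟩
  have hD : ∀ f : Fin m → Fin n, 0 < ∑ j, c (f j) :=
    fun f => Finset.sum_pos (fun j _ => hcpos _) Finset.univ_nonempty
  set F : ℝ → ℝ := fun t => ∑ f : Fin m → Fin n, (∏ j, x (f j)) * t ^ ((∑ j, c (f j)) - 1)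
    with hFdef
  set g : ℝ → ℝ := fun t => ∑ i, x i * t ^ (c i) with hgdef
  -- integrability of each summand
  have hint : ∀ f : Fin m → Fin n, IntervalIntegrable
      (fun t : ℝ => (∏ j, x (f j)) * t ^ ((∑ j, c (f j)) - 1)) volume 0 1 :=
    fun f => (intervalIntegrable_rpow' (by linarith [hD f])).const_mul _
  have hFi : IntervalIntegrable F volume 0 1 := by
    have h := IntervalIntegrable.sum (μ := volume) (a := 0) (b := 1) Finset.univ
      (f := fun (f : Fin m → Fin n) => fun t : ℝ => (∏ j, x (f j)) * t ^ ((∑ j, c (f j)) - 1))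
      (fun f _ => hint f)
    rwa [Finset.sum_fn] at h
  -- the value of the sum as an integral
  have eq1 : (∑ f : Fin m → Fin n, (∏ j, x (f j)) / (∑ j, c (f j))) = ∫ t in (0:ℝ)..1, F t := by
    rw [hFdef]
    rw [integral_finset_sum (fun f _ => hint f)]
    refine Finset.sum_congr rfl fun f _ => ?_
    rw [intervalIntegral.integral_const_mul, integral_rpow (Or.inl (by linarith [hD f]))]
    rw [sub_add_cancel, Real.one_rpow, Real.zero_rpow (hD f).ne']
    rw [div_eq_mul_one_div]
    ring
  -- pointwise identity
  have key : ∀ t : ℝ, 0 < t → F t = (g t) ^ m * t⁻¹ := by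
    intro t ht
    rw [hgdef, hFdef]
    simp only
    rw [Fintype.sum_pow, Finset.sum_mul]
    refine Finset.sum_congr rfl fun f _ => ?_
    rw [Finset.prod_mul_distrib, ← Real.rpow_sum_of_pos ht]
    rw [Real.rpow_sub ht, Real.rpow_one, div_eq_mul_inv]
    ring
  obtain ⟨t₀, ht₀mem, hgt₀⟩ := ht₀ex
  have ht₀pos : 0 < t₀ := ht₀mem.1
  -- nonnegativity a.e.
  have hnonneg : 0 ≤ᵐ[volume.restrict (Set.uIoc (0:ℝ) 1)] F := by
    rw [uIoc_of_le (zero_le_one (α := ℝ))]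
    refine (ae_restrict_iff' measurableSet_Ioc).mpr (ae_of_all _ fun t ht => ?_)
    rw [key t ht.1]
    exact mul_nonneg (hme.pow_nonneg _) (inv_nonneg.2 ht.1.le)
  -- continuity of F at t₀
  have hcont : ContinuousAt F t₀ := by
    exact tendsto_finset_sum _ fun f _ =>
      Filter.Tendsto.const_mul _ (Real.continuousAt_rpow_const t₀ _ (Or.inl ht₀pos.ne'))
  have hFt₀pos : 0 < F t₀ := by
    rw [key t₀ ht₀pos]
    exact mul_pos (hme.pow_pos hgt₀) (inv_pos.2 ht₀pos)
  -- the support of F has positive measure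
  have hsupp : 0 < volume (support F ∩ Ioc (0:ℝ) 1) := by
    have hev : ∀ᶠ t in 𝓝 t₀, 0 < F t ∧ t ∈ Ioo (0:ℝ) 1 :=
      (hcont.eventually (eventually_gt_nhds hFt₀pos)).and
        (eventually_mem_set.mpr (isOpen_Ioo.mem_nhds ht₀mem))
    obtain ⟨l, u, hmem, hsub⟩ := mem_nhds_iff_exists_Ioo_subset.mp hev
    have hIoo : Ioo l u ⊆ support F ∩ Ioc (0:ℝ) 1 := fun t ht => by
      obtain ⟨h1, h2⟩ := hsub ht
      exact ⟨h1.ne', Ioo_subset_Ioc_self h2⟩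
    calc (0:ENNReal) < volume (Ioo l u) := by
          rw [Real.volume_Ioo]
          exact ENNReal.ofReal_pos.2 (sub_pos.2 (hmem.1.trans hmem.2))
      _ ≤ _ := measure_mono hIoo
  rw [eq1]
  exact (integral_pos_iff_support_of_nonneg_ae' hnonneg hFi).mpr ⟨one_pos, hsupp⟩

/-- An even order symmetric Cauchy tensor is positive definite iff the
entries of its generating vector are positive and mutually distinct. -/
theorem cauchy_tensor_pd_iff_pos_distinct
    (m n : ℕ) (hm : 0 < m) (hme : Even m) (c : Fin n → ℝ)
    (hc : ∀ i : Fin m → Fin n, (∑ j, c (i j)) ≠ 0) :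
    (∀ x : Fin n → ℝ, x ≠ 0 →
        0 < ∑ i : Fin m → Fin n, (∏ j, x (i j)) / (∑ j, c (i j))) ↔
      ((∀ i, 0 < c i) ∧ ∀ i j, i ≠ j → c i ≠ c j) := by
  classical
  constructor
  · intro hpd
    constructor
    · -- positivity of the generating vector
      intro i
      set x : Fin n → ℝ := fun k => if k = i then 1 else 0 with hxdef
      have hxne : x ≠ 0 := by
        intro h
        have := congrFun h i
        simp [hxdef] at this
      have h1 := hpd x hxne
      have hsum : ∑ f : Fin m → Fin n, (∏ j, x (f j)) / (∑ j, c (f j)) = 1 / (m * c i) := by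
        rw [Finset.sum_eq_single (fun _ => i)]
        · simp [hxdef, Finset.sum_const, Finset.card_univ, nsmul_eq_mul]
        · intro f _ hf
          have : ∃ j, f j ≠ i := by
            by_contra h; push_neg at h; exact hf (funext h)
          obtain ⟨j, hj⟩ := this
          have : ∏ j, x (f j) = 0 :=
            Finset.prod_eq_zero (Finset.mem_univ j) (by simp [hxdef, hj])
          simp [this]
        · simp
      rw [hsum, one_div_pos] at h1
      have hm' : (0:ℝ) < m := by exact_mod_cast hm
      nlinarith
    · -- distinctness of the generating vector
      intro i j hij hcij
      set x : Fin n → ℝ := fun k => (if k = i then 1 else 0) - (if k = j then 1 else 0)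
        with hxdef
      have hxne : x ≠ 0 := by
        intro h
        have := congrFun h i
        simp [hxdef, hij] at this
      have h1 := hpd x hxne
      have key : ∀ f : Fin m → Fin n,
          (∏ l, x (f l)) / (∑ l, c (f l)) = (∏ l, x (f l)) / (m * c i) := by
        intro f
        by_cases hp : (∏ l, x (f l)) = 0
        · simp [hp]
        · have hall : ∀ l, c (f l) = c i := by
            intro l
            have hxl : x (f l) ≠ 0 := fun h => hp (Finset.prod_eq_zero (Finset.mem_univ l) h)
            rcases eq_or_ne (f l) i with h | h
            · rw [h]
            rcases eq_or_ne (f l) j with h' | h'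
            · rw [h', ← hcij]
            · exfalso; apply hxl; simp [hxdef, h, h']
          rw [show (∑ l, c (f l)) = m * c i by
            simp [hall, Finset.sum_const, Finset.card_univ, nsmul_eq_mul]]
      rw [Finset.sum_congr rfl (fun f _ => key f), ← Finset.sum_div] at h1
      have hzero : (∑ f : Fin m → Fin n, ∏ l, x (f l)) = 0 := by
        rw [← Fintype.sum_pow]
        have : (∑ k, x k) = 0 := by simp [hxdef]
        rw [this, zero_pow hm.ne']
      rw [hzero, zero_div] at h1
      exact lt_irrefl 0 h1
  · rintro ⟨hcpos, hdist⟩ x hx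
    exact cauchy_aux_pos m n hm hme c hcpos x (cauchy_aux_exists_pt n c hdist x hx)
end

section
/- Let m be an even positive integer and let 𝒞 be the order m dimension n symmetric Cauchy tensor with generating vector c ∈ ℝ^n, and define f(x) = 𝒞x^m. Then 𝒞 is positive semi-definite if and only if f is monotone increasing on the nonnegative orthant, i.e., for all x, y ∈ ℝ^n with 0 ≤ y ≤ x (componentwise), f(y) ≤ f(x). -/
open MeasureTheory Real

private lemma cauchy_psd_of_pos (m n : ℕ) (hm : 0 < m) (hme : Even m) (c : Fin n → ℝ)
    (hcpos : ∀ k, 0 < c k) (x : Fin n → ℝ) :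
    0 ≤ ∑ i : Fin m → Fin n, (∏ j, x (i j)) / (∑ j, c (i j)) := by
  have : Nonempty (Fin m) := ⟨⟨0, hm⟩⟩
  have hs : ∀ i : Fin m → Fin n, 0 < ∑ j, c (i j) := fun i =>
    Finset.sum_pos (fun j _ => hcpos _) Finset.univ_nonempty
  have key : ∀ i : Fin m → Fin n,
      (∏ j, x (i j)) / (∑ j, c (i j)) =
        ∫ t in (0:ℝ)..1, (∏ j, x (i j)) * t ^ ((∑ j, c (i j)) - 1) := by
    intro i
    rw [intervalIntegral.integral_const_mul,
      integral_rpow (Or.inl (by linarith [hs i]))]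
    have h1 : (∑ j, c (i j)) - 1 + 1 = ∑ j, c (i j) := by ring
    rw [h1, Real.one_rpow, Real.zero_rpow (ne_of_gt (hs i))]
    ring
  have hint : ∀ i : Fin m → Fin n, IntervalIntegrable
      (fun t : ℝ => (∏ j, x (i j)) * t ^ ((∑ j, c (i j)) - 1)) volume 0 1 :=
    fun i => (intervalIntegral.intervalIntegrable_rpow' (by linarith [hs i])).const_mul _
  calc (0:ℝ) ≤ ∫ t in (0:ℝ)..1,
        ∑ i : Fin m → Fin n, (∏ j, x (i j)) * t ^ ((∑ j, c (i j)) - 1) := by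
        rw [intervalIntegral.integral_of_le zero_le_one]
        refine setIntegral_nonneg measurableSet_Ioc fun t ht => ?_
        have ht0 : 0 < t := ht.1
        have hexp : (∑ k, x k * t ^ c k) ^ m =
            ∑ i : Fin m → Fin n, (∏ j, x (i j)) * t ^ (∑ j, c (i j)) := by
          rw [Fintype.sum_pow]
          refine Finset.sum_congr rfl fun i _ => ?_
          rw [Finset.prod_mul_distrib, Real.rpow_sum_of_pos ht0]
        have heq : ∑ i : Fin m → Fin n, (∏ j, x (i j)) * t ^ ((∑ j, c (i j)) - 1) =
            (∑ k, x k * t ^ c k) ^ m / t := by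
          rw [hexp, Finset.sum_div]
          refine Finset.sum_congr rfl fun i _ => ?_
          rw [Real.rpow_sub ht0, Real.rpow_one]
          ring
        rw [heq]
        exact div_nonneg (hme.pow_nonneg _) ht0.le
    _ = ∑ i : Fin m → Fin n, (∏ j, x (i j)) / (∑ j, c (i j)) := by
        rw [intervalIntegral.integral_finset_sum (fun i _ => hint i)]
        exact Finset.sum_congr rfl fun i _ => (key i).symm

private lemma cauchy_single (m n : ℕ) (hm : 0 < m) (c : Fin n → ℝ) (k : Fin n) :
    ∑ i : Fin m → Fin n,
        (∏ j, (fun l => if l = k then (1:ℝ) else 0) (i j)) / (∑ j, c (i j)) =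
      1 / (m * c k) := by
  rw [Finset.sum_eq_single_of_mem (fun _ : Fin m => k) (Finset.mem_univ _)]
  · simp [Finset.sum_const, nsmul_eq_mul]
  · intro i _ hi
    have : ∃ j, i j ≠ k := by
      by_contra h
      push_neg at h
      exact hi (funext h)
    obtain ⟨j, hj⟩ := this
    rw [Finset.prod_eq_zero (Finset.mem_univ j) (by simp [hj]), zero_div]

/-- An even order symmetric Cauchy tensor is positive semi-definite iff
the homogeneous polynomial `f(x) = 𝒞xᵐ` is monotone increasing on the nonnegative
orthant. -/
theorem cauchy_tensor_psd_iff_monotone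
    (m n : ℕ) (hm : 0 < m) (hme : Even m) (c : Fin n → ℝ)
    (hc : ∀ i : Fin m → Fin n, (∑ j, c (i j)) ≠ 0) :
    (∀ x : Fin n → ℝ,
        0 ≤ ∑ i : Fin m → Fin n, (∏ j, x (i j)) / (∑ j, c (i j))) ↔
      (∀ x y : Fin n → ℝ, (∀ i, 0 ≤ y i) → (∀ i, y i ≤ x i) →
        (∑ i : Fin m → Fin n, (∏ j, y (i j)) / (∑ j, c (i j)))
          ≤ ∑ i : Fin m → Fin n, (∏ j, x (i j)) / (∑ j, c (i j))) := by
  have hne : Nonempty (Fin m) := ⟨⟨0, hm⟩⟩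
  have hmck : ∀ k : Fin n, (m : ℝ) * c k ≠ 0 := by
    intro k
    simpa [Finset.sum_const, nsmul_eq_mul] using hc (fun _ => k)
  have hmpos : (0:ℝ) < m := Nat.cast_pos.mpr hm
  have hpos_of : ∀ k : Fin n,
      (0:ℝ) ≤ 1 / (m * c k) → 0 < c k := by
    intro k h1
    have hmc : 0 < (m : ℝ) * c k := by
      rcases (hmck k).lt_or_gt with h | h
      · exfalso
        have : 1 / ((m:ℝ) * c k) < 0 := div_neg_of_pos_of_neg one_pos h
        linarith
      · exact h
    nlinarith
  constructor
  · intro hpsd x y hy hxy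
    have hcpos : ∀ k, 0 < c k := fun k => hpos_of k (by
      simpa [cauchy_single m n hm c k] using
        hpsd (fun l => if l = k then (1:ℝ) else 0))
    have hs : ∀ i : Fin m → Fin n, 0 < ∑ j, c (i j) := fun i =>
      Finset.sum_pos (fun j _ => hcpos _) Finset.univ_nonempty
    refine Finset.sum_le_sum fun i _ => ?_
    have hp : ∏ j, y (i j) ≤ ∏ j, x (i j) :=
      Finset.prod_le_prod (fun j _ => hy _) (fun j _ => hxy _)
    exact (div_le_div_iff_of_pos_right (hs i)).mpr hp
  · intro hmono x
    have hcpos : ∀ k, 0 < c k := by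
      intro k
      refine hpos_of k ?_
      have h0 := hmono (fun l => if l = k then (1:ℝ) else 0) (fun _ => 0)
        (fun _ => le_refl 0) (fun l => by split <;> norm_num)
      simpa [cauchy_single m n hm c k, Finset.prod_const, zero_pow hm.ne'] using h0
    exact cauchy_psd_of_pos m n hm hme c hcpos x
end

section
/- Let m be an even positive integer and let 𝒞 be the order m dimension n symmetric Cauchy tensor with generating vector c ∈ ℝ^n, and define f(x) = 𝒞x^m. If 𝒞 is positive definite, then f is strictly monotone increasing on the nonnegative orthant: for all x, y ∈ ℝ^n with 0 ≤ y ≤ x (componentwise) and x ≠ y, f(y) < f(x). -/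
/-- If an even order symmetric Cauchy tensor is positive definite, then
`f(x) = 𝒞xᵐ` is strictly monotone increasing on the nonnegative orthant. -/
theorem cauchy_tensor_pd_implies_strict_monotone
    (m n : ℕ) (hm : 0 < m) (hme : Even m) (c : Fin n → ℝ)
    (hc : ∀ i : Fin m → Fin n, (∑ j, c (i j)) ≠ 0)
    (hpd : ∀ x : Fin n → ℝ, x ≠ 0 →
        0 < ∑ i : Fin m → Fin n, (∏ j, x (i j)) / (∑ j, c (i j))) :
    ∀ x y : Fin n → ℝ, (∀ i, 0 ≤ y i) → (∀ i, y i ≤ x i) → x ≠ y →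
      (∑ i : Fin m → Fin n, (∏ j, y (i j)) / (∑ j, c (i j)))
        < ∑ i : Fin m → Fin n, (∏ j, x (i j)) / (∑ j, c (i j)) := by
  -- First: every c k is positive.
  have hcpos : ∀ k : Fin n, 0 < c k := by
    intro k
    have hne : (Pi.single k (1:ℝ) : Fin n → ℝ) ≠ 0 := by
      intro h
      have := congrFun h k
      simp [Pi.single_eq_same] at this
    have hpos := hpd _ hne
    have hsum : (∑ i : Fin m → Fin n, (∏ j, (Pi.single k (1:ℝ) : Fin n → ℝ) (i j)) / (∑ j, c (i j)))
        = 1 / (m * c k) := by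
      rw [Finset.sum_eq_single (fun _ => k)]
      · simp [Finset.prod_const_one, Finset.sum_const, Finset.card_univ, mul_comm]
      · intro i _ hi
        have : ∃ j, i j ≠ k := by
          by_contra h
          push_neg at h
          exact hi (funext h)
        obtain ⟨j, hj⟩ := this
        rw [Finset.prod_eq_zero (Finset.mem_univ j) (by simp [Pi.single_eq_of_ne hj])]
        simp
      · intro h
        exact absurd (Finset.mem_univ _) h
    rw [hsum] at hpos
    have hmc : 0 < (m : ℝ) * c k := by
      by_contra h
      push_neg at h
      have : 1 / ((m:ℝ) * c k) ≤ 0 := div_nonpos_of_nonneg_of_nonpos zero_le_one h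
      linarith
    have hm' : (0:ℝ) < m := by exact_mod_cast hm
    nlinarith
  intro x y hy hyx hxy
  have hS : ∀ i : Fin m → Fin n, 0 < ∑ j, c (i j) := by
    intro i
    apply Finset.sum_pos (fun j _ => hcpos (i j))
    simpa [Finset.univ_nonempty_iff] using Fin.pos_iff_nonempty.mp hm
  obtain ⟨k, hk⟩ : ∃ k, y k < x k := by
    by_contra h
    push_neg at h
    exact hxy (funext fun k => le_antisymm (h k) (hyx k))
  apply Finset.sum_lt_sum
  · intro i _
    apply div_le_div_of_nonneg_right ?_ (hS i).le |>.trans_eq rfl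
    exact Finset.prod_le_prod (fun j _ => hy (i j)) (fun j _ => hyx (i j))
  · refine ⟨fun _ => k, Finset.mem_univ _, ?_⟩
    have hprod : (∏ j : Fin m, y ((fun _ => k) j)) < ∏ j : Fin m, x ((fun _ => k) j) := by
      simp only [Finset.prod_const, Finset.card_univ, Fintype.card_fin]
      exact pow_lt_pow_left₀ hk (hy k) hm.ne'
    exact (div_lt_div_iff_of_pos_right (hS _)).mpr hprod
end

section
/- Let m be an even positive integer and let 𝒞 be the order m dimension n symmetric Cauchy tensor with generating vector c ∈ ℝ^n satisfying c_i > 0 for all i, and let r_i = Σ_{i_2,…,i_m=1}^n 1/(c_i + c_{i_2} + ⋯ + c_{i_m}) be the row sums of 𝒞. Then 𝒞 is positive definite if and only if r_1, r_2,…, r_n are mutually distinct. -/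
open Finset Matrix MeasureTheory intervalIntegral Set
open scoped ENNReal

lemma vand_zero {n : ℕ} {c y : Fin n → ℝ} (hinj : Function.Injective c)
    (h : ∀ p : Fin n, ∑ k, y k * c k ^ (p : ℕ) = 0) : y = 0 := by
  set A : Matrix (Fin n) (Fin n) ℝ := Matrix.of fun p k => c k ^ (p : ℕ) with hA
  have hdet : A.det ≠ 0 := by
    have : A = (Matrix.vandermonde c)ᵀ := by
      ext p k; simp [hA, Matrix.vandermonde]
    rw [this, Matrix.det_transpose]
    intro h0
    obtain ⟨i, j, hcij, hij⟩ := Matrix.det_vandermonde_eq_zero_iff.mp h0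
    exact hij (hinj hcij)
  have hu : IsUnit A := (Matrix.isUnit_iff_isUnit_det A).mpr (isUnit_iff_ne_zero.mpr hdet)
  have hi : Function.Injective A.mulVec := Matrix.mulVec_injective_iff_isUnit.mpr hu
  have : A.mulVec y = A.mulVec 0 := by
    rw [Matrix.mulVec_zero]
    funext p
    simpa [A, Matrix.mulVec, dotProduct, mul_comm] using h p
  exact hi this

lemma rpow_lin_indep {n : ℕ} {c : Fin n → ℝ} (hinj : Function.Injective c)
    {x : Fin n → ℝ}
    (h : ∀ t ∈ Set.Ioo (0:ℝ) 1, ∑ k, x k * t ^ (c k) = 0) : x = 0 := by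
  have key : ∀ p : ℕ, ∀ t ∈ Set.Ioo (0:ℝ) 1, ∑ k, x k * c k ^ p * t ^ (c k) = 0 := by
    intro p
    induction p with
    | zero => simpa using h
    | succ p ih =>
      intro t ht
      have ht0 : (0:ℝ) < t := ht.1
      set G : ℝ → ℝ := fun s => ∑ k, x k * c k ^ p * s ^ (c k) with hG
      have hder : HasDerivAt G (∑ k, x k * c k ^ p * (c k * t ^ (c k - 1))) t := by
        apply HasDerivAt.fun_sum
        intro k _
        exact (Real.hasDerivAt_rpow_const (Or.inl ht0.ne')).const_mul _
      have hev : G =ᶠ[nhds t] (fun _ => (0:ℝ)) := by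
        filter_upwards [isOpen_Ioo.mem_nhds ht] with s hs
        exact ih s hs
      have hd0 : deriv G t = 0 := by
        rw [hev.deriv_eq]; simp
      rw [hder.deriv] at hd0
      have : ∑ k, x k * c k ^ (p+1) * t ^ (c k) =
          t * ∑ k, x k * c k ^ p * (c k * t ^ (c k - 1)) := by
        rw [Finset.mul_sum]
        refine Finset.sum_congr rfl fun k _ => ?_
        have : t * t ^ (c k - 1) = t ^ (c k) := by
          have h1 := Real.rpow_add ht0 1 (c k - 1)
          rw [show (1:ℝ) + (c k - 1) = c k by ring, Real.rpow_one] at h1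
          exact h1.symm
        calc x k * c k ^ (p+1) * t ^ (c k)
            = x k * c k ^ (p+1) * (t * t ^ (c k - 1)) := by rw [this]
          _ = t * (x k * c k ^ p * (c k * t ^ (c k - 1))) := by ring
      rw [this, hd0, mul_zero]
  have h2 : (fun k => x k * (1/2 : ℝ) ^ (c k)) = 0 := by
    apply vand_zero hinj
    intro p
    have := key p (1/2) (by norm_num)
    rw [← this]
    refine Finset.sum_congr rfl fun k _ => by ring
  funext k
  have := congrFun h2 k
  simp only [Pi.zero_apply, mul_eq_zero] at this
  rcases this with h' | h'
  · exact h'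
  · exact absurd h' (Real.rpow_pos_of_pos (by norm_num) _).ne'

lemma cauchy_degenerate {m n : ℕ} (hm : 0 < m) {c : Fin n → ℝ}
    {i j : Fin n} (hcij : c i = c j) {x : Fin n → ℝ}
    (hxs : ∑ l, x l = 0) (hsupp : ∀ l, l ≠ i → l ≠ j → x l = 0) :
    ∑ a : Fin m → Fin n, (∏ k, x (a k)) / (∑ k, c (a k)) = 0 := by
  have hstep : ∀ a : Fin m → Fin n,
      (∏ k, x (a k)) / (∑ k, c (a k)) = (∏ k, x (a k)) * (1 / (m * c i)) := by
    intro a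
    by_cases ha : ∀ k, a k = i ∨ a k = j
    · have hsum : ∑ k, c (a k) = m * c i := by
        have h1 : ∀ k : Fin m, c (a k) = c i := by
          intro k; rcases ha k with h | h
          · rw [h]
          · rw [h, ← hcij]
        rw [Finset.sum_congr rfl fun k _ => h1 k]
        simp [mul_comm]
      rw [hsum, div_eq_mul_one_div]
    · push_neg at ha
      obtain ⟨k, hki, hkj⟩ := ha
      have hz : ∏ k, x (a k) = 0 :=
        Finset.prod_eq_zero (Finset.mem_univ k) (hsupp _ hki hkj)
      rw [hz, zero_div, zero_mul]
  rw [Finset.sum_congr rfl fun a _ => hstep a, ← Finset.sum_mul, ← Fintype.sum_pow]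
  rw [hxs, zero_pow hm.ne', zero_mul]

lemma cauchy_pos {m n : ℕ} (hm : 0 < m) (hme : Even m) {c : Fin n → ℝ}
    (hc : ∀ i, 0 < c i) (hinj : Function.Injective c) {x : Fin n → ℝ} (hx : x ≠ 0) :
    0 < ∑ i : Fin m → Fin n, (∏ j, x (i j)) / (∑ j, c (i j)) := by
  haveI : NeZero m := ⟨hm.ne'⟩
  -- denominators positive
  have hD : ∀ a : Fin m → Fin n, 0 < ∑ k, c (a k) := fun a =>
    Finset.sum_pos (fun k _ => hc (a k)) (univ_nonempty)
  set g : ℝ → ℝ := fun t => ∑ k, x k * t ^ (c k) with hg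
  set h : ℝ → ℝ := fun t => g t ^ m / t with hh
  set F : ℝ → ℝ := fun t => ∑ a : Fin m → Fin n, (∏ k, x (a k)) * t ^ ((∑ k, c (a k)) - 1)
    with hF
  -- each piece interval integrable
  have hint : ∀ a : Fin m → Fin n, IntervalIntegrable
      (fun t => (∏ k, x (a k)) * t ^ ((∑ k, c (a k)) - 1)) volume 0 1 := by
    intro a
    exact (intervalIntegrable_rpow' (by linarith [hD a])).const_mul _
  have hFint : IntervalIntegrable F volume 0 1 := by
    have h1 := IntervalIntegrable.sum
      (f := fun (a : Fin m → Fin n) (t : ℝ) => (∏ k, x (a k)) * t ^ ((∑ k, c (a k)) - 1))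
      univ (fun a _ => hint a)
    have h2 : F = ∑ a : Fin m → Fin n,
        fun t : ℝ => (∏ k, x (a k)) * t ^ ((∑ k, c (a k)) - 1) := by
      funext t
      rw [Finset.sum_apply]
    rw [h2]
    exact h1
  -- the sum equals the integral of F
  have hS : ∑ a : Fin m → Fin n, (∏ k, x (a k)) / (∑ k, c (a k)) = ∫ t in (0:ℝ)..1, F t := by
    have h1 : (∫ t in (0:ℝ)..1, F t)
        = ∑ a : Fin m → Fin n, ∫ t in (0:ℝ)..1, (∏ k, x (a k)) * t ^ ((∑ k, c (a k)) - 1) :=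
      intervalIntegral.integral_finset_sum (fun a _ => hint a)
    rw [h1]
    refine Finset.sum_congr rfl fun a _ => ?_
    symm
    rw [intervalIntegral.integral_const_mul, integral_rpow (Or.inl (by linarith [hD a]))]
    rw [sub_add_cancel]
    rw [Real.one_rpow, Real.zero_rpow (hD a).ne']
    ring
  -- F = h on (0, 1]
  have hFh : ∀ t : ℝ, 0 < t → F t = h t := by
    intro t ht
    have hterm : ∀ a : Fin m → Fin n,
        (∏ k, x (a k)) * t ^ ((∑ k, c (a k)) - 1)
          = (∏ k, x (a k) * t ^ (c (a k))) / t := by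
      intro a
      rw [Real.rpow_sub ht, Real.rpow_one, Real.rpow_sum_of_pos ht]
      rw [Finset.prod_mul_distrib]
      ring
    simp only [hF, hh, hg]
    rw [Finset.sum_congr rfl fun a _ => hterm a, ← Finset.sum_div,
      Fintype.sum_pow (fun l => x l * t ^ (c l)) m]
  -- nonnegativity of h on Ioc
  have hnonneg : ∀ t ∈ Set.Ioc (0:ℝ) 1, 0 ≤ h t := by
    intro t ht
    exact div_nonneg (hme.pow_nonneg _) ht.1.le
  -- there is a point where g ≠ 0
  have hne : ∃ t0 ∈ Set.Ioo (0:ℝ) 1, g t0 ≠ 0 := by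
    by_contra hcon
    push_neg at hcon
    exact hx (rpow_lin_indep hinj fun t ht => hcon t ht)
  obtain ⟨t0, ht0, hgt0⟩ := hne
  -- h positive at t0 and continuous there
  have hpos0 : 0 < h t0 := by
    apply div_pos _ ht0.1
    exact lt_of_le_of_ne (hme.pow_nonneg _) (pow_ne_zero _ hgt0).symm
  have hcont : ContinuousAt h t0 := by
    apply ContinuousAt.div _ continuousAt_id ht0.1.ne'
    apply ContinuousAt.pow
    exact tendsto_finset_sum _ fun k _ =>
      ((Real.continuousAt_rpow_const t0 (c k) (Or.inl ht0.1.ne')).const_mul _)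
  -- get a ball where h > 0 and inside Ioo 0 1
  have hev : ∀ᶠ t in nhds t0, 0 < h t ∧ t ∈ Set.Ioo (0:ℝ) 1 := by
    filter_upwards [hcont (Ioi_mem_nhds hpos0), isOpen_Ioo.mem_nhds ht0] with t h1 h2
    exact ⟨h1, h2⟩
  obtain ⟨ε, hε, hball⟩ := Metric.eventually_nhds_iff_ball.mp hev
  -- integrability of h on Ioc 0 1
  have hFI : IntegrableOn F (Set.Ioc 0 1) volume := by
    rw [← intervalIntegrable_iff_integrableOn_Ioc_of_le zero_le_one]
    exact hFint
  have hhI : IntegrableOn h (Set.Ioc 0 1) volume :=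
    hFI.congr_fun (fun t ht => hFh t ht.1) measurableSet_Ioc
  -- positivity of the integral
  have hμ : 0 < volume (Function.support h ∩ Set.Ioc 0 1) := by
    have hsub : Metric.ball t0 ε ⊆ Function.support h ∩ Set.Ioc 0 1 := by
      intro t ht
      obtain ⟨h1, h2⟩ := hball t ht
      exact ⟨h1.ne', h2.1, h2.2.le⟩
    calc (0:ℝ≥0∞) < volume (Metric.ball t0 ε) := Metric.measure_ball_pos _ _ hε
      _ ≤ _ := measure_mono hsub
  have hIpos : 0 < ∫ t in Set.Ioc (0:ℝ) 1, h t := by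
    rw [setIntegral_pos_iff_support_of_nonneg_ae _ hhI]
    · exact hμ
    · exact (ae_restrict_iff' measurableSet_Ioc).2 (ae_of_all _ fun t ht => hnonneg t ht)
  rw [hS, integral_of_le zero_le_one]
  rw [setIntegral_congr_fun measurableSet_Ioc (fun t ht => hFh t ht.1)]
  exact hIpos

/-- An even order symmetric Cauchy tensor with positive generating
vector is positive definite iff its row sums are mutually distinct. -/
theorem cauchy_tensor_pd_iff_row_sums_distinct
    (m n : ℕ) (hm : 0 < m) (hme : Even m) (c : Fin n → ℝ)
    (hc : ∀ i, 0 < c i) :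
    (∀ x : Fin n → ℝ, x ≠ 0 →
        0 < ∑ i : Fin m → Fin n, (∏ j, x (i j)) / (∑ j, c (i j))) ↔
      (∀ i j : Fin n, i ≠ j →
        (∑ t : Fin (m - 1) → Fin n, 1 / (c i + ∑ k, c (t k)))
          ≠ ∑ t : Fin (m - 1) → Fin n, 1 / (c j + ∑ k, c (t k))) := by
  have hrow_mono : ∀ i j : Fin n, c i < c j →
      ∑ t : Fin (m - 1) → Fin n, 1 / (c j + ∑ k, c (t k))
        < ∑ t : Fin (m - 1) → Fin n, 1 / (c i + ∑ k, c (t k)) := by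
    intro i j hij
    haveI : Nonempty (Fin n) := ⟨i⟩
    apply Finset.sum_lt_sum_of_nonempty Finset.univ_nonempty
    intro t _
    have hS : 0 ≤ ∑ k, c (t k) := Finset.sum_nonneg fun k _ => (hc (t k)).le
    exact one_div_lt_one_div_of_lt (by linarith [hc i]) (by linarith)
  constructor
  · intro hpd i j hij heq
    have hcij : c i = c j := by
      rcases lt_trichotomy (c i) (c j) with h | h | h
      · exact absurd heq.symm (hrow_mono i j h).ne
      · exact h
      · exact absurd heq (hrow_mono j i h).ne
    set x : Fin n → ℝ := fun l => if l = i then (1:ℝ) else if l = j then -1 else 0 with hx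
    have hx0 : x ≠ 0 := by
      intro h0
      have h1 := congrFun h0 i
      simp [hx] at h1
    have hxs : ∑ l, x l = 0 := by
      have h2 : x = (fun l => (if l = i then (1:ℝ) else 0) + (if l = j then -1 else 0)) := by
        funext l
        by_cases h1 : l = i
        · subst h1; simp [hx, hij]
        · by_cases h2 : l = j <;> simp [hx, h1, h2, Ne.symm hij]
      rw [h2, Finset.sum_add_distrib]
      simp
    have hsupp : ∀ l, l ≠ i → l ≠ j → x l = 0 := by
      intro l h1 h2; simp [hx, h1, h2]
    have hlt := hpd x hx0
    rw [cauchy_degenerate hm hcij hxs hsupp] at hlt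
    exact lt_irrefl 0 hlt
  · intro hr x hx
    have hinj : Function.Injective c := by
      intro a b hab
      by_contra hne
      exact hr a b hne (Finset.sum_congr rfl fun t _ => by rw [hab])
    exact cauchy_pos hm hme hc hinj hx
end

section
/- Let m be an even positive integer and let 𝒞 and 𝒞′ be order m dimension n symmetric Cauchy tensors with generating vectors c and c′ respectively. If 𝒞 and 𝒞′ are positive semi-definite, then their Hadamard product 𝒞 ∘ 𝒞′ is a positive semi-definite tensor: for every x ∈ ℝ^n, Σ_{i_1,…,i_m=1}^n x_{i_1}⋯x_{i_m} / [(c_{i_1}+⋯+c_{i_m})(c′_{i_1}+⋯+c′_{i_m})] ≥ 0. -/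
open MeasureTheory intervalIntegral Real Finset

/-- The Hadamard product of two positive semi-definite even order
symmetric Cauchy tensors is positive semi-definite. -/
theorem hadamard_product_cauchy_psd
    (m n : ℕ) (hm : 0 < m) (hme : Even m) (c c' : Fin n → ℝ)
    (hc : ∀ i : Fin m → Fin n, (∑ j, c (i j)) ≠ 0)
    (hc' : ∀ i : Fin m → Fin n, (∑ j, c' (i j)) ≠ 0)
    (hpsd : ∀ x : Fin n → ℝ,
        0 ≤ ∑ i : Fin m → Fin n, (∏ j, x (i j)) / (∑ j, c (i j)))
    (hpsd' : ∀ x : Fin n → ℝ,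
        0 ≤ ∑ i : Fin m → Fin n, (∏ j, x (i j)) / (∑ j, c' (i j))) :
    ∀ x : Fin n → ℝ,
      0 ≤ ∑ i : Fin m → Fin n,
            (∏ j, x (i j)) / ((∑ j, c (i j)) * (∑ j, c' (i j))) := by
  have hmne : (m : ℝ) ≠ 0 := Nat.cast_ne_zero.mpr hm.ne'
  -- Step A: all entries of the generating vectors are positive
  have key : ∀ (d : Fin n → ℝ), (∀ i : Fin m → Fin n, (∑ j, d (i j)) ≠ 0) →
      (∀ x : Fin n → ℝ, 0 ≤ ∑ i : Fin m → Fin n, (∏ j, x (i j)) / (∑ j, d (i j))) →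
      ∀ k, 0 < d k := by
    intro d hd hp k
    have h1 := hp (fun l => if l = k then 1 else 0)
    have h2 : ∑ i : Fin m → Fin n, (∏ j, (if i j = k then (1:ℝ) else 0)) / (∑ j, d (i j))
        = 1 / ((m : ℝ) * d k) := by
      rw [Finset.sum_eq_single (fun _ => k)]
      · simp [mul_comm]
      · intro i _ hi
        have : ∃ j, i j ≠ k := by
          by_contra h; push_neg at h; exact hi (funext h)
        obtain ⟨j, hj⟩ := this
        rw [Finset.prod_eq_zero (Finset.mem_univ j) (by simp [hj]), zero_div]
      · simp
    rw [h2] at h1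
    have hne : (m : ℝ) * d k ≠ 0 := by simpa [mul_comm] using hd (fun _ => k)
    have hpos : 0 < 1 / ((m : ℝ) * d k) :=
      lt_of_le_of_ne h1 (Ne.symm (one_div_ne_zero hne))
    have hmd : 0 < (m : ℝ) * d k := one_div_pos.mp hpos
    rcases mul_pos_iff.mp hmd with ⟨_, h⟩ | ⟨h, _⟩
    · exact h
    · exact absurd h (not_lt.mpr (Nat.cast_nonneg m))
  have hcpos := key c hc hpsd
  have hc'pos := key c' hc' hpsd'
  intro x
  have hne : (Finset.univ : Finset (Fin m)).Nonempty := ⟨⟨0, hm⟩, Finset.mem_univ _⟩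
  set p : (Fin m → Fin n) → ℝ := fun i => ∏ j, x (i j) with hp_def
  set a : (Fin m → Fin n) → ℝ := fun i => ∑ j, c (i j) with ha_def
  set b : (Fin m → Fin n) → ℝ := fun i => ∑ j, c' (i j) with hb_def
  have ha : ∀ i, 0 < a i := fun i => Finset.sum_pos (fun j _ => hcpos (i j)) hne
  have hb : ∀ i, 0 < b i := fun i => Finset.sum_pos (fun j _ => hc'pos (i j)) hne
  set e : Fin n → ℝ := fun k => c k - 1 / m with he_def
  set e' : Fin n → ℝ := fun k => c' k - 1 / m with he'_def
  have hesum : ∀ i : Fin m → Fin n, ∑ j, e (i j) = a i - 1 := by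
    intro i
    simp only [he_def, Finset.sum_sub_distrib, Finset.sum_const, Finset.card_univ,
      Fintype.card_fin, nsmul_eq_mul, ha_def]
    field_simp
  have he'sum : ∀ i : Fin m → Fin n, ∑ j, e' (i j) = b i - 1 := by
    intro i
    simp only [he'_def, Finset.sum_sub_distrib, Finset.sum_const, Finset.card_univ,
      Fintype.card_fin, nsmul_eq_mul, hb_def]
    field_simp
  -- the mixing function
  set g : ℝ → ℝ → ℝ := fun t s => ∑ k, x k * t ^ e k * s ^ e' k with hg_def
  have hexpand : ∀ t s : ℝ, 0 < t → 0 < s →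
      (g t s) ^ m = ∑ i : Fin m → Fin n, p i * t ^ (a i - 1) * s ^ (b i - 1) := by
    intro t s ht hs
    have : (g t s) ^ m = ∏ _j : Fin m, ∑ k, x k * t ^ e k * s ^ e' k := by
      simp [hg_def, Finset.prod_const]
    rw [this, Finset.prod_univ_sum]
    rw [Fintype.piFinset_univ]
    refine Finset.sum_congr rfl fun i _ => ?_
    rw [Finset.prod_mul_distrib, Finset.prod_mul_distrib,
      ← Real.rpow_sum_of_pos ht, ← Real.rpow_sum_of_pos hs, hesum, he'sum]
  -- inner integral
  set F : ℝ → ℝ := fun t => ∑ i : Fin m → Fin n, (p i / b i) * t ^ (a i - 1) with hF_def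
  have hinner : ∀ t : ℝ, 0 < t → F t = ∫ s in (0:ℝ)..1, (g t s) ^ m := by
    intro t ht
    rw [integral_of_le zero_le_one]
    rw [MeasureTheory.setIntegral_congr_fun measurableSet_Ioc
      (fun s hs => hexpand t s ht hs.1)]
    rw [← integral_of_le zero_le_one]
    rw [intervalIntegral.integral_finset_sum (fun i _ =>
      ((intervalIntegrable_rpow' (by linarith [hb i] : (-1:ℝ) < b i - 1)).const_mul
        (p i * t ^ (a i - 1))))]
    refine Finset.sum_congr rfl fun i _ => ?_
    rw [intervalIntegral.integral_const_mul,
      integral_rpow (Or.inl (by linarith [hb i] : (-1:ℝ) < b i - 1))]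
    rw [sub_add_cancel, Real.one_rpow, Real.zero_rpow (hb i).ne', sub_zero]
    field_simp
  -- outer integral
  have houter : ∑ i : Fin m → Fin n, p i / (a i * b i) = ∫ t in (0:ℝ)..1, F t := by
    rw [hF_def]
    rw [intervalIntegral.integral_finset_sum (fun i _ =>
      ((intervalIntegrable_rpow' (by linarith [ha i] : (-1:ℝ) < a i - 1)).const_mul
        (p i / b i)))]
    refine Finset.sum_congr rfl fun i _ => ?_
    rw [intervalIntegral.integral_const_mul,
      integral_rpow (Or.inl (by linarith [ha i] : (-1:ℝ) < a i - 1))]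
    rw [sub_add_cancel, Real.one_rpow, Real.zero_rpow (ha i).ne', sub_zero]
    field_simp
  have hgoal : (∑ i : Fin m → Fin n,
      (∏ j, x (i j)) / ((∑ j, c (i j)) * (∑ j, c' (i j))))
      = ∑ i : Fin m → Fin n, p i / (a i * b i) := rfl
  rw [hgoal, houter, integral_of_le zero_le_one]
  refine MeasureTheory.setIntegral_nonneg measurableSet_Ioc fun t ht => ?_
  rw [hinner t ht.1]
  exact intervalIntegral.integral_nonneg zero_le_one fun s _ => hme.pow_nonneg _
end

section
/- Let m be an even positive integer and let 𝒞_1, 𝒞_2, …, 𝒞_L be order m dimension n symmetric Cauchy tensors, each positive semi-definite, with generating vectors c^{(1)},…,c^{(L)} respectively. Then the Hadamard product 𝒞_1 ∘ 𝒞_2 ∘ ⋯ ∘ 𝒞_L is a positive semi-definite tensor: for every x ∈ ℝ^n, Σ_{i_1,…,i_m=1}^n x_{i_1}⋯x_{i_m} · Π_{k=1}^L 1/(c^{(k)}_{i_1}+⋯+c^{(k)}_{i_m}) ≥ 0. -/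
open MeasureTheory intervalIntegral in
lemma cauchy_hadamard_aux (m n : ℕ) (hm : 0 < m) (hme : Even m) :
    ∀ L (c : Fin L → Fin n → ℝ), (∀ k i, 0 < c k i) →
    ∀ x : Fin n → ℝ,
      0 ≤ ∑ i : Fin m → Fin n, (∏ j, x (i j)) * ∏ k, 1 / (∑ j, c k (i j)) := by
  intro L
  induction L with
  | zero =>
    intro c hc x
    simp only [Finset.univ_eq_empty, Finset.prod_empty, mul_one]
    have : ∑ i : Fin m → Fin n, ∏ j, x (i j) = (∑ a, x a) ^ m := by
      rw [Fintype.sum_pow]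
    rw [this]
    exact hme.pow_nonneg _
  | succ L ih =>
    intro c hc x
    set cL : Fin n → ℝ := c (Fin.last L) with hcL
    have hs : ∀ i : Fin m → Fin n, 0 < ∑ j, cL (i j) := by
      intro i
      apply Finset.sum_pos (fun j _ => hc _ _)
      haveI : Nonempty (Fin m) := ⟨⟨0, hm⟩⟩
      exact Finset.univ_nonempty
    have key : ∀ i : Fin m → Fin n,
        (∏ j, x (i j)) * ∏ k, 1 / (∑ j, c k (i j))
          = ∫ t in (0:ℝ)..1, ((∏ j, x (i j)) * ∏ k : Fin L, 1 / (∑ j, c (k.castSucc) (i j)))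
              * t ^ ((∑ j, cL (i j)) - 1) := by
      intro i
      rw [intervalIntegral.integral_const_mul, integral_rpow (Or.inl (by linarith [hs i])),
        sub_add_cancel, Real.one_rpow, Real.zero_rpow (hs i).ne', Fin.prod_univ_castSucc]
      ring
    rw [Finset.sum_congr rfl (fun i _ => key i),
      ← intervalIntegral.integral_finset_sum (fun i _ =>
        (intervalIntegral.intervalIntegrable_rpow' (by linarith [hs i])).const_mul _),
      intervalIntegral.integral_of_le zero_le_one]
    apply setIntegral_nonneg measurableSet_Ioc
    intro t ht
    obtain ⟨ht0, ht1⟩ := ht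
    have hpt : ∀ i : Fin m → Fin n,
        ((∏ j, x (i j)) * ∏ k : Fin L, 1 / (∑ j, c (k.castSucc) (i j)))
            * t ^ ((∑ j, cL (i j)) - 1)
          = ((∏ j, (x (i j) * t ^ (cL (i j))))
              * ∏ k : Fin L, 1 / (∑ j, c (k.castSucc) (i j))) * t⁻¹ := by
      intro i
      rw [Finset.prod_mul_distrib, ← Real.rpow_sum_of_pos ht0,
        Real.rpow_sub ht0, Real.rpow_one]
      ring
    rw [Finset.sum_congr rfl (fun i _ => hpt i), ← Finset.sum_mul]
    have := ih (fun k => c k.castSucc) (fun k i => hc _ i)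
      (fun a => x a * t ^ (cL a))
    exact mul_nonneg this (inv_nonneg.mpr ht0.le)

/-- The Hadamard product of finitely many positive semi-definite even
order symmetric Cauchy tensors is positive semi-definite. -/
theorem hadamard_product_finitely_many_cauchy_psd
    (m n L : ℕ) (hm : 0 < m) (hme : Even m) (c : Fin L → Fin n → ℝ)
    (hc : ∀ k : Fin L, ∀ i : Fin m → Fin n, (∑ j, c k (i j)) ≠ 0)
    (hpsd : ∀ k : Fin L, ∀ x : Fin n → ℝ,
        0 ≤ ∑ i : Fin m → Fin n, (∏ j, x (i j)) / (∑ j, c k (i j))) :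
    ∀ x : Fin n → ℝ,
      0 ≤ ∑ i : Fin m → Fin n,
            (∏ j, x (i j)) * ∏ k : Fin L, 1 / (∑ j, c k (i j)) := by
  have hpos : ∀ k i, 0 < c k i := by
    intro k i
    have h := hpsd k (fun a => if a = i then (1:ℝ) else 0)
    have hsum : ∑ f : Fin m → Fin n, (∏ j, (if f j = i then (1:ℝ) else 0)) / (∑ j, c k (f j))
        = 1 / (∑ j : Fin m, c k i) := by
      rw [Finset.sum_eq_single (fun _ => i)]
      · simp
      · intro f _ hf
        have : ∃ j, f j ≠ i := by
          by_contra h'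
          push_neg at h'
          exact hf (funext h')
        obtain ⟨j, hj⟩ := this
        have : (∏ j, (if f j = i then (1:ℝ) else 0)) = 0 :=
          Finset.prod_eq_zero (Finset.mem_univ j) (if_neg hj)
        rw [this, zero_div]
      · intro h'; exact absurd (Finset.mem_univ _) h'
    rw [hsum] at h
    have hne := hc k (fun _ => i)
    have : 0 < ∑ j : Fin m, c k i := by
      rcases lt_or_gt_of_ne hne with hlt | hgt
      · exfalso
        have : 1 / (∑ j : Fin m, c k i) < 0 := div_neg_of_pos_of_neg one_pos hlt
        linarith
      · exact hgt
    simp only [Finset.sum_const, Finset.card_univ, Fintype.card_fin, nsmul_eq_mul] at this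
    have hm' : (0:ℝ) < m := Nat.cast_pos.mpr hm
    by_contra h'
    push_neg at h'
    nlinarith
  exact cauchy_hadamard_aux m n hm hme L c hpos
end

section
/- Let m be an even positive integer and let 𝒞 and 𝒞′ be order m dimension n symmetric Cauchy tensors with generating vectors c and c′ respectively. If 𝒞 and 𝒞′ are positive definite, then their Hadamard product 𝒞 ∘ 𝒞′ is a positive definite tensor: for every nonzero x ∈ ℝ^n, Σ_{i_1,…,i_m=1}^n x_{i_1}⋯x_{i_m} / [(c_{i_1}+⋯+c_{i_m})(c′_{i_1}+⋯+c′_{i_m})] > 0. -/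
/-- The Hadamard product of two positive definite even order symmetric
Cauchy tensors is positive definite. -/
theorem hadamard_product_cauchy_pd
    (m n : ℕ) (hm : 0 < m) (hme : Even m) (c c' : Fin n → ℝ)
    (hc : ∀ i : Fin m → Fin n, (∑ j, c (i j)) ≠ 0)
    (hc' : ∀ i : Fin m → Fin n, (∑ j, c' (i j)) ≠ 0)
    (hpd : ∀ x : Fin n → ℝ, x ≠ 0 →
        0 < ∑ i : Fin m → Fin n, (∏ j, x (i j)) / (∑ j, c (i j)))
    (hpd' : ∀ x : Fin n → ℝ, x ≠ 0 →
        0 < ∑ i : Fin m → Fin n, (∏ j, x (i j)) / (∑ j, c' (i j))) :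
    ∀ x : Fin n → ℝ, x ≠ 0 →
      0 < ∑ i : Fin m → Fin n,
            (∏ j, x (i j)) / ((∑ j, c (i j)) * (∑ j, c' (i j))) := by
  intro x hx
  have hm' : (0:ℝ) < m := by exact_mod_cast hm
  haveI : Nonempty (Fin m) := Fin.pos_iff_nonempty.mp hm
  -- Step 1: every c' k is positive
  have key : ∀ k : Fin n, 0 < c' k := by
    intro k
    have hx1 : (Pi.single k 1 : Fin n → ℝ) ≠ 0 := by
      intro h
      have := congrFun h k
      simp at this
    have h := hpd' (Pi.single k 1) hx1
    have hsum : (∑ i : Fin m → Fin n, (∏ j, (Pi.single k 1 : Fin n → ℝ) (i j)) / (∑ j, c' (i j)))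
        = 1 / (m * c' k) := by
      rw [Finset.sum_eq_single (fun _ : Fin m => k)]
      · simp [Finset.prod_const, Finset.sum_const]
      · intro i _ hi
        obtain ⟨j, hj⟩ : ∃ j, i j ≠ k := by
          by_contra h'
          push_neg at h'
          exact hi (funext h')
        rw [Finset.prod_eq_zero (Finset.mem_univ j) (Pi.single_eq_of_ne hj 1), zero_div]
      · intro h
        exact absurd (Finset.mem_univ _) h
    rw [hsum] at h
    have h2 : (0:ℝ) < m * c' k := (one_div_pos.mp h)
    nlinarith
  -- b i > 0
  have hbpos : ∀ i : Fin m → Fin n, 0 < ∑ j, c' (i j) := fun i =>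
    Finset.sum_pos (fun j _ => key (i j)) Finset.univ_nonempty
  -- the integrand
  set F : ℝ → ℝ := fun s =>
    ∑ i : Fin m → Fin n, ((∏ j, x (i j)) / (∑ j, c (i j))) * s ^ ((∑ j, c' (i j)) - 1)
    with hF
  -- each term is interval integrable
  have hterm : ∀ i : Fin m → Fin n, IntervalIntegrable
      (fun s : ℝ => ((∏ j, x (i j)) / (∑ j, c (i j))) * s ^ ((∑ j, c' (i j)) - 1))
      MeasureTheory.volume 0 1 := by
    intro i
    exact (intervalIntegral.intervalIntegrable_rpow' (by linarith [hbpos i])).const_mul _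
  have hFi : IntervalIntegrable F MeasureTheory.volume 0 1 := by
    have h := IntervalIntegrable.sum (μ := MeasureTheory.volume) (a := (0:ℝ)) (b := 1)
      Finset.univ (f := fun (i : Fin m → Fin n) (s : ℝ) =>
        ((∏ j, x (i j)) / (∑ j, c (i j))) * s ^ ((∑ j, c' (i j)) - 1))
      (fun i _ => hterm i)
    have he : F = ∑ i : Fin m → Fin n, (fun (s : ℝ) =>
        ((∏ j, x (i j)) / (∑ j, c (i j))) * s ^ ((∑ j, c' (i j)) - 1)) := by
      funext s
      simp [hF, Finset.sum_apply]
    rw [he]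
    exact h
  -- the integral of F equals the target sum
  have hint : ∫ s in (0:ℝ)..1, F s
      = ∑ i : Fin m → Fin n, (∏ j, x (i j)) / ((∑ j, c (i j)) * (∑ j, c' (i j))) := by
    rw [hF, intervalIntegral.integral_finset_sum (fun i _ => hterm i)]
    refine Finset.sum_congr rfl (fun i _ => ?_)
    rw [intervalIntegral.integral_const_mul, integral_rpow (Or.inl (by linarith [hbpos i]))]
    rw [sub_add_cancel]
    rw [Real.one_rpow, Real.zero_rpow (hbpos i).ne']
    field_simp
    ring
  -- F is positive on (0,1)
  have hFpos : ∀ s ∈ Set.Ioo (0:ℝ) 1, 0 < F s := by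
    intro s hs
    set y : Fin n → ℝ := fun k => x k * s ^ (c' k) with hy
    have hy0 : y ≠ 0 := by
      obtain ⟨k, hk⟩ := Function.ne_iff.mp hx
      refine Function.ne_iff.mpr ⟨k, ?_⟩
      simp only [hy, Pi.zero_apply]
      exact mul_ne_zero (by simpa using hk) (Real.rpow_pos_of_pos hs.1 _).ne'
    have h := hpd y hy0
    have heq : F s = (∑ i : Fin m → Fin n, (∏ j, y (i j)) / (∑ j, c (i j))) / s := by
      rw [hF, Finset.sum_div]
      refine Finset.sum_congr rfl (fun i _ => ?_)
      have hp : (∏ j, y (i j)) = (∏ j, x (i j)) * s ^ (∑ j, c' (i j)) := by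
        simp only [hy]
        rw [Finset.prod_mul_distrib, ← Real.rpow_sum_of_pos hs.1]
      rw [hp, Real.rpow_sub hs.1, Real.rpow_one]
      field_simp
    rw [heq]
    exact div_pos h hs.1
  have := intervalIntegral.intervalIntegral_pos_of_pos_on hFi hFpos one_pos
  rwa [hint] at this
end

section
/- Let m be an even positive integer and let 𝒞 be the order m dimension n symmetric Cauchy tensor with generating vector c ∈ ℝ^n whose entries have different signs (there exist i, j with c_i > 0 and c_j < 0). Define λ_max = sup{𝒞x^m : x ∈ ℝ^n, Σ_{i=1}^n x_i^m = 1} and λ_min = inf{𝒞x^m : x ∈ ℝ^n, Σ_{i=1}^n x_i^m = 1}. Then λ_min ≤ 1/(m·max{c_i : c_i < 0}) < 0 < 1/(m·min{c_i : c_i > 0}) ≤ λ_max. -/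
lemma cauchy_aux_mem (m n : ℕ) (hm : 0 < m) (c : Fin n → ℝ) (i₀ : Fin n) :
    (1 / (m * c i₀)) ∈ {y : ℝ | ∃ x : Fin n → ℝ, (∑ i, (x i) ^ m) = 1 ∧
      y = ∑ i : Fin m → Fin n, (∏ j, x (i j)) / (∑ j, c (i j))} := by
  refine ⟨fun j => if j = i₀ then 1 else 0, ?_, ?_⟩
  · simp [apply_ite (· ^ m), zero_pow hm.ne', Finset.sum_ite_eq']
  · rw [Finset.sum_eq_single (fun _ : Fin m => i₀)]
    · simp [Finset.sum_const, mul_comm]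
    · intro b _ hb
      have : ∃ j, b j ≠ i₀ := by
        by_contra h
        push_neg at h
        exact hb (funext h)
      obtain ⟨j, hj⟩ := this
      rw [Finset.prod_eq_zero (Finset.mem_univ j) (by simp [hj]), zero_div]
    · intro h
      exact absurd (Finset.mem_univ _) h

lemma cauchy_aux_bdd (m n : ℕ) (hm : 0 < m) (hme : Even m) (c : Fin n → ℝ)
    (hc : ∀ i : Fin m → Fin n, (∑ j, c (i j)) ≠ 0) :
    ∀ y ∈ {y : ℝ | ∃ x : Fin n → ℝ, (∑ i, (x i) ^ m) = 1 ∧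
      y = ∑ i : Fin m → Fin n, (∏ j, x (i j)) / (∑ j, c (i j))},
      |y| ≤ ∑ i : Fin m → Fin n, 1 / |∑ j, c (i j)| := by
  rintro y ⟨x, hx, rfl⟩
  have habs : ∀ k, |x k| ≤ 1 := by
    intro k
    have h1 : x k ^ m ≤ 1 := by
      rw [← hx]
      exact Finset.single_le_sum (fun i _ => hme.pow_nonneg (x i)) (Finset.mem_univ k)
    have h2 : |x k| ^ m ≤ 1 := by rwa [hme.pow_abs]
    exact (pow_le_one_iff_of_nonneg (abs_nonneg _) hm.ne').mp h2
  calc |∑ i : Fin m → Fin n, (∏ j, x (i j)) / (∑ j, c (i j))|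
      ≤ ∑ i : Fin m → Fin n, |(∏ j, x (i j)) / (∑ j, c (i j))| :=
        Finset.abs_sum_le_sum_abs _ _
    _ ≤ ∑ i : Fin m → Fin n, 1 / |∑ j, c (i j)| := by
        apply Finset.sum_le_sum
        intro i _
        rw [abs_div, Finset.abs_prod]
        gcongr
        exact Finset.prod_le_one (fun j _ => abs_nonneg _) (fun j _ => habs _)
  
theorem cauchy_tensor_eigenvalue_sign_bounds
    (m n : ℕ) (hm : 0 < m) (hme : Even m) (c : Fin n → ℝ)
    (hc : ∀ i : Fin m → Fin n, (∑ j, c (i j)) ≠ 0)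
    (hpos : ∃ i, 0 < c i) (hneg : ∃ i, c i < 0) :
    sInf {y : ℝ | ∃ x : Fin n → ℝ, (∑ i, (x i) ^ m) = 1 ∧
          y = ∑ i : Fin m → Fin n, (∏ j, x (i j)) / (∑ j, c (i j))}
        ≤ 1 / (m * sSup {a : ℝ | (∃ i, c i = a) ∧ a < 0}) ∧
      1 / (m * sSup {a : ℝ | (∃ i, c i = a) ∧ a < 0}) < 0 ∧
      0 < 1 / (m * sInf {a : ℝ | (∃ i, c i = a) ∧ 0 < a}) ∧
      1 / (m * sInf {a : ℝ | (∃ i, c i = a) ∧ 0 < a})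
        ≤ sSup {y : ℝ | ∃ x : Fin n → ℝ, (∑ i, (x i) ^ m) = 1 ∧
            y = ∑ i : Fin m → Fin n, (∏ j, x (i j)) / (∑ j, c (i j))} := by
  set S := {y : ℝ | ∃ x : Fin n → ℝ, (∑ i, (x i) ^ m) = 1 ∧
      y = ∑ i : Fin m → Fin n, (∏ j, x (i j)) / (∑ j, c (i j))} with hS
  set B := ∑ i : Fin m → Fin n, 1 / |∑ j, c (i j)| with hB
  have hbnd := cauchy_aux_bdd m n hm hme c hc
  have hBA : BddAbove S := ⟨B, fun y hy => (abs_le.mp (hbnd y hy)).2⟩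
  have hBB : BddBelow S := ⟨-B, fun y hy => (abs_le.mp (hbnd y hy)).1⟩
  have hmR : (0 : ℝ) < (m : ℝ) := by exact_mod_cast hm
  -- negative part
  have hTfin : {a : ℝ | (∃ i, c i = a) ∧ a < 0}.Finite :=
    (Set.finite_range c).subset (by rintro a ⟨⟨i, rfl⟩, _⟩; exact ⟨i, rfl⟩)
  have hTne : {a : ℝ | (∃ i, c i = a) ∧ a < 0}.Nonempty := by
    obtain ⟨j, hj⟩ := hneg; exact ⟨c j, ⟨j, rfl⟩, hj⟩
  obtain ⟨⟨ineg, hineg⟩, hslt⟩ := hTne.csSup_mem hTfin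
  -- positive part
  have hPfin : {a : ℝ | (∃ i, c i = a) ∧ 0 < a}.Finite :=
    (Set.finite_range c).subset (by rintro a ⟨⟨i, rfl⟩, _⟩; exact ⟨i, rfl⟩)
  have hPne : {a : ℝ | (∃ i, c i = a) ∧ 0 < a}.Nonempty := by
    obtain ⟨j, hj⟩ := hpos; exact ⟨c j, ⟨j, rfl⟩, hj⟩
  obtain ⟨⟨ipos, hipos⟩, hsgt⟩ := hPne.csInf_mem hPfin
  refine ⟨?_, ?_, ?_, ?_⟩
  · rw [← hineg]
    exact csInf_le hBB (cauchy_aux_mem m n hm c ineg)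
  · exact one_div_neg.mpr (mul_neg_of_pos_of_neg hmR hslt)
  · exact one_div_pos.mpr (mul_pos hmR hsgt)
  · rw [← hipos]
    exact le_csSup hBA (cauchy_aux_mem m n hm c ipos)
end

section
/- Let m be an even positive integer and let 𝒞 be the order m dimension n symmetric Cauchy tensor with generating vector c ∈ ℝ^n satisfying c_i > 0 for all i and with at least two entries of c distinct. Let r_i = Σ_{i_2,…,i_m=1}^n 1/(c_i+c_{i_2}+⋯+c_{i_m}) be the row sums, R = max_i r_i, r = min_i r_i, and ā = max_i c_i. Suppose λ ∈ ℝ and x ∈ ℝ^n with x_i > 0 for all i satisfy Σ_{i_2,…,i_m=1}^n x_{i_2}⋯x_{i_m}/(c_i+c_{i_2}+⋯+c_{i_m}) = λ x_i^{m-1} for every i. Then r + (1/(m ā))(√(R/r) − 1) < λ < R − (1/(m ā))(1 − √(r/R)). -/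
set_option maxHeartbeats 2000000 in
/-- Bounds on the largest H-eigenvalue (the eigenvalue with a positive
eigenvector) of a positive semi-definite even order symmetric Cauchy tensor whose
generating vector has at least two distinct entries:
`r + (1/(m·ā))(√(R/r) − 1) < λ < R − (1/(m·ā))(1 − √(r/R))`. -/
theorem cauchy_tensor_largest_H_eigenvalue_bounds
    (m n : ℕ) (hm : 0 < m) (hme : Even m) (c : Fin n → ℝ)
    (hc : ∀ i, 0 < c i)
    (hdist : ∃ i j : Fin n, c i ≠ c j)
    (rowSum : Fin n → ℝ)
    (hrow : ∀ i, rowSum i = ∑ t : Fin (m - 1) → Fin n, 1 / (c i + ∑ j, c (t j)))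
    (R r abar : ℝ)
    (hR : ∀ i, rowSum i ≤ R) (hRmem : ∃ i, rowSum i = R)
    (hr : ∀ i, r ≤ rowSum i) (hrmem : ∃ i, rowSum i = r)
    (ha : ∀ i, c i ≤ abar) (hamem : ∃ i, c i = abar)
    (lam : ℝ) (x : Fin n → ℝ) (hx : ∀ i, 0 < x i)
    (heig : ∀ i : Fin n,
        (∑ t : Fin (m - 1) → Fin n, (∏ j, x (t j)) / (c i + ∑ j, c (t j)))
          = lam * (x i) ^ (m - 1)) :
    r + 1 / (m * abar) * (Real.sqrt (R / r) - 1) < lam ∧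
      lam < R - 1 / (m * abar) * (1 - Real.sqrt (r / R)) := by
  obtain ⟨i0, hi0⟩ := hRmem
  obtain ⟨i1, hi1⟩ := hrmem
  obtain ⟨ia, hia⟩ := hamem
  obtain ⟨iD, jD, hij⟩ := hdist
  haveI hn : Nonempty (Fin n) := ⟨iD⟩
  have hnd : iD ≠ jD := fun e => hij (by rw [e])
  have hn2 : 2 ≤ n := by
    by_contra hlt
    push_neg at hlt
    have h1 := iD.isLt
    have h2 := jD.isLt
    apply hnd
    apply Fin.ext
    omega
  have habar : 0 < abar := hia ▸ hc ia
  have hm2 : 2 ≤ m := by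
    rcases hme with ⟨k, hk⟩; omega
  have hmabar : 0 < (m : ℝ) * abar := by
    have : (0:ℝ) < (m:ℝ) := by exact_mod_cast hm
    positivity
  set h : ℝ := 1 / ((m : ℝ) * abar) with hhdef
  have hh : 0 < h := by rw [hhdef]; positivity
  -- denominators are positive and at most m * abar
  have hd : ∀ (i : Fin n) (t : Fin (m - 1) → Fin n), 0 < c i + ∑ j, c (t j) := by
    intro i t
    have : (0:ℝ) ≤ ∑ j, c (t j) := Finset.sum_nonneg fun j _ => (hc _).le
    linarith [hc i]
  have hdle : ∀ (i : Fin n) (t : Fin (m - 1) → Fin n), c i + ∑ j, c (t j) ≤ (m : ℝ) * abar := by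
    intro i t
    have h1 : ∑ j, c (t j) ≤ ∑ _j : Fin (m - 1), abar :=
      Finset.sum_le_sum fun j _ => ha (t j)
    have h2 : ∑ _j : Fin (m - 1), abar = ((m : ℝ) - 1) * abar := by
      rw [Finset.sum_const, Finset.card_univ, Fintype.card_fin, nsmul_eq_mul]
      have h3 : ((m - 1 : ℕ) : ℝ) = (m : ℝ) - 1 := by
        rw [Nat.cast_sub (by omega)]; norm_num
      rw [h3]
    rw [h2] at h1
    have := ha i
    nlinarith
  have hentry : ∀ (i : Fin n) (t : Fin (m - 1) → Fin n), h ≤ 1 / (c i + ∑ j, c (t j)) :=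
    fun i t => one_div_le_one_div_of_le (hd i t) (hdle i t)
  -- row sums are at least 2h
  have hcard : 2 ≤ Fintype.card (Fin (m - 1) → Fin n) := by
    rw [Fintype.card_fun, Fintype.card_fin, Fintype.card_fin]
    exact Nat.one_lt_pow (by omega : m - 1 ≠ 0) (by omega : 1 < n)
  have hrsge : ∀ i, 2 * h ≤ rowSum i := by
    intro i
    rw [hrow]
    calc 2 * h ≤ (Fintype.card (Fin (m - 1) → Fin n) : ℝ) * h := by
          have h4 : (2:ℝ) ≤ (Fintype.card (Fin (m - 1) → Fin n) : ℝ) := by exact_mod_cast hcard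
          nlinarith
      _ = ∑ _t : Fin (m - 1) → Fin n, h := by
          rw [Finset.sum_const, Finset.card_univ, nsmul_eq_mul]
      _ ≤ _ := Finset.sum_le_sum fun t _ => hentry i t
  have hhr : h < r := by
    have := hrsge i1
    rw [hi1] at this
    linarith
  have hrpos : 0 < r := lt_trans hh hhr
  have hrR : r < R := by
    have key : ∀ a b : Fin n, c a < c b → rowSum b < rowSum a := by
      intro a b hab
      rw [hrow, hrow]
      refine Finset.sum_lt_sum_of_nonempty Finset.univ_nonempty fun t _ => ?_
      exact one_div_lt_one_div_of_lt (hd a t) (by linarith)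
    rcases hij.lt_or_gt with h1 | h1
    · calc r ≤ rowSum jD := hr jD
        _ < rowSum iD := key iD jD h1
        _ ≤ R := hR iD
    · calc r ≤ rowSum iD := hr iD
        _ < rowSum jD := key jD iD h1
        _ ≤ R := hR jD
  have hRpos : 0 < R := lt_trans hrpos hrR
  have hhR : h < R := lt_trans hhr hrR
  -- extremal entries of the eigenvector
  obtain ⟨p, hp⟩ := Finite.exists_max x
  obtain ⟨q, hq⟩ := Finite.exists_min x
  set X : ℝ := x p ^ (m - 1) with hXdef
  set Y : ℝ := x q ^ (m - 1) with hYdef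
  have hX : 0 < X := pow_pos (hx p) _
  have hY : 0 < Y := pow_pos (hx q) _
  have hYX : Y ≤ X := pow_le_pow_left₀ (hx q).le (hq p) _
  have hPle : ∀ t : Fin (m - 1) → Fin n, (∏ j, x (t j)) ≤ X := by
    intro t
    calc (∏ j, x (t j)) ≤ ∏ _j : Fin (m - 1), x p :=
          Finset.prod_le_prod (fun j _ => (hx _).le) (fun j _ => hp (t j))
      _ = X := by rw [Finset.prod_const, Finset.card_univ, Fintype.card_fin, hXdef]
  have hPge : ∀ t : Fin (m - 1) → Fin n, Y ≤ ∏ j, x (t j) := by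
    intro t
    calc Y = ∏ _j : Fin (m - 1), x q := by
          rw [Finset.prod_const, Finset.card_univ, Fintype.card_fin, hYdef]
      _ ≤ ∏ j, x (t j) :=
          Finset.prod_le_prod (fun j _ => (hx q).le) (fun j _ => hq (t j))
  have hPpos : ∀ t : Fin (m - 1) → Fin n, 0 < ∏ j, x (t j) :=
    fun t => Finset.prod_pos fun j _ => hx (t j)
  -- sums of constants over rows
  have hsumX : ∀ i : Fin n, ∑ t : Fin (m - 1) → Fin n, X / (c i + ∑ j, c (t j))
      = rowSum i * X := by
    intro i
    rw [hrow, Finset.sum_mul]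
    exact Finset.sum_congr rfl fun t _ => by rw [one_div_mul_eq_div]
  have hsumY : ∀ i : Fin n, ∑ t : Fin (m - 1) → Fin n, Y / (c i + ∑ j, c (t j))
      = rowSum i * Y := by
    intro i
    rw [hrow, Finset.sum_mul]
    exact Finset.sum_congr rfl fun t _ => by rw [one_div_mul_eq_div]
  -- lambda is positive
  have hlam : 0 < lam := by
    have hpos : 0 < ∑ t : Fin (m - 1) → Fin n, (∏ j, x (t j)) / (c p + ∑ j, c (t j)) :=
      Finset.sum_pos (fun t _ => div_pos (hPpos t) (hd p t)) Finset.univ_nonempty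
    rw [heig p, ← hXdef] at hpos
    by_contra hle
    push_neg at hle
    nlinarith
  -- product over the constant tuples
  have hconstq : (∏ j, x ((fun _ : Fin (m - 1) => q) j)) = Y := by
    rw [Finset.prod_const, Finset.card_univ, Fintype.card_fin, hYdef]
  have hconstp : (∏ j, x ((fun _ : Fin (m - 1) => p) j)) = X := by
    rw [Finset.prod_const, Finset.card_univ, Fintype.card_fin, hXdef]
  -- (A)  lam * X ≤ R * X - (X - Y) * h
  have hA : lam * X ≤ R * X - (X - Y) * h := by
    have e := heig p
    rw [← hXdef] at e
    have key : (X - Y) * h ≤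
        ∑ t : Fin (m - 1) → Fin n,
          (X / (c p + ∑ j, c (t j)) - (∏ j, x (t j)) / (c p + ∑ j, c (t j))) := by
      have h1 : (X - Y) * h ≤
          X / (c p + ∑ j, c ((fun _ : Fin (m - 1) => q) j))
            - (∏ j, x ((fun _ : Fin (m - 1) => q) j))
                / (c p + ∑ j, c ((fun _ : Fin (m - 1) => q) j)) := by
        rw [hconstq, div_sub_div_same]
        calc (X - Y) * h
            ≤ (X - Y) * (1 / (c p + ∑ j, c ((fun _ : Fin (m - 1) => q) j))) :=
              mul_le_mul_of_nonneg_left (hentry p _) (by linarith)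
          _ = (X - Y) / (c p + ∑ j, c ((fun _ : Fin (m - 1) => q) j)) := by
              rw [mul_one_div]
      refine h1.trans (Finset.single_le_sum
        (f := fun t : Fin (m - 1) → Fin n =>
          X / (c p + ∑ j, c (t j)) - (∏ j, x (t j)) / (c p + ∑ j, c (t j)))
        (fun t _ => ?_) (Finset.mem_univ (fun _ : Fin (m - 1) => q)))
      rw [div_sub_div_same]
      exact div_nonneg (by linarith [hPle t]) (hd p t).le
    rw [Finset.sum_sub_distrib, hsumX p, e] at key
    nlinarith [hR p, hX]
  -- (B)  r * Y + (X - Y) * h ≤ lam * Y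
  have hB : r * Y + (X - Y) * h ≤ lam * Y := by
    have e := heig q
    rw [← hYdef] at e
    have key : (X - Y) * h ≤
        ∑ t : Fin (m - 1) → Fin n,
          ((∏ j, x (t j)) / (c q + ∑ j, c (t j)) - Y / (c q + ∑ j, c (t j))) := by
      have h1 : (X - Y) * h ≤
          (∏ j, x ((fun _ : Fin (m - 1) => p) j))
              / (c q + ∑ j, c ((fun _ : Fin (m - 1) => p) j))
            - Y / (c q + ∑ j, c ((fun _ : Fin (m - 1) => p) j)) := by
        rw [hconstp, div_sub_div_same]
        calc (X - Y) * h
            ≤ (X - Y) * (1 / (c q + ∑ j, c ((fun _ : Fin (m - 1) => p) j))) :=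
              mul_le_mul_of_nonneg_left (hentry q _) (by linarith)
          _ = (X - Y) / (c q + ∑ j, c ((fun _ : Fin (m - 1) => p) j)) := by
              rw [mul_one_div]
      refine h1.trans (Finset.single_le_sum
        (f := fun t : Fin (m - 1) → Fin n =>
          (∏ j, x (t j)) / (c q + ∑ j, c (t j)) - Y / (c q + ∑ j, c (t j)))
        (fun t _ => ?_) (Finset.mem_univ (fun _ : Fin (m - 1) => p)))
      rw [div_sub_div_same]
      exact div_nonneg (by linarith [hPge t]) (hd q t).le
    rw [Finset.sum_sub_distrib, hsumY q, e] at key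
    nlinarith [hr q, hY]
  -- (C)  R * Y ≤ lam * X
  have hC : R * Y ≤ lam * X := by
    have e := heig i0
    have key : R * Y ≤ lam * x i0 ^ (m - 1) := by
      rw [← hi0, ← e, ← hsumY i0]
      exact Finset.sum_le_sum fun t _ => (div_le_div_iff_of_pos_right (hd i0 t)).mpr (hPge t)
    have h2 : x i0 ^ (m - 1) ≤ X := pow_le_pow_left₀ (hx i0).le (hp i0) _
    nlinarith
  -- (D)  lam * Y ≤ r * X
  have hD : lam * Y ≤ r * X := by
    have e := heig i1
    have key : lam * x i1 ^ (m - 1) ≤ r * X := by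
      rw [← hi1, ← e, ← hsumX i1]
      exact Finset.sum_le_sum fun t _ => (div_le_div_iff_of_pos_right (hd i1 t)).mpr (hPle t)
    have h2 : Y ≤ x i1 ^ (m - 1) := pow_le_pow_left₀ (hx q).le (hq i1) _
    nlinarith
  -- square-root facts
  set τ : ℝ := Real.sqrt (r / R) with hτdef
  set σ : ℝ := Real.sqrt (R / r) with hσdef
  have hτpos : 0 < τ := Real.sqrt_pos.mpr (by positivity)
  have hσpos : 0 < σ := Real.sqrt_pos.mpr (by positivity)
  have hτsq : τ ^ 2 = r / R := Real.sq_sqrt (by positivity)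
  have hστ : σ * τ = 1 := by
    rw [hσdef, hτdef, ← Real.sqrt_mul (by positivity : (0:ℝ) ≤ R / r)]
    rw [div_mul_div_comm, mul_comm R r, div_self (by positivity : (0:ℝ) < r * R).ne']
    exact Real.sqrt_one
  have hrdivR : r / R < 1 := (div_lt_one hRpos).mpr hrR
  have hτ1 : τ < 1 := by
    have h5 := Real.sqrt_lt_sqrt (by positivity : (0:ℝ) ≤ r / R) hrdivR
    rwa [Real.sqrt_one] at h5
  have hσ1 : 1 < σ := by
    have h4 : (1:ℝ) < R / r := (one_lt_div hrpos).mpr hrR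
    have h5 := Real.sqrt_lt_sqrt zero_le_one h4
    rwa [Real.sqrt_one] at h5
  have hRτ2 : R * τ ^ 2 = r := by
    rw [hτsq, mul_comm, div_mul_cancel₀ r hRpos.ne']
  have hRτ : R * τ = r * σ := by
    have h1 : R * τ * τ = r := by rw [← hRτ2]; ring
    have h2 : r * σ * τ = r := by rw [mul_assoc, hστ, mul_one]
    exact mul_right_cancel₀ hτpos.ne' (h1.trans h2.symm)
  constructor
  · -- lower bound
    show r + h * (σ - 1) < lam
    rcases lt_or_ge Y (τ * X) with hcase | hcase
    · have hXσY : σ * Y < X := by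
        have h1 := mul_lt_mul_of_pos_left hcase hσpos
        nlinarith
      nlinarith [hB, mul_pos (sub_pos.mpr hXσY) hh, hY]
    · have h1 : R * (τ * X) ≤ R * Y := mul_le_mul_of_nonneg_left hcase hRpos.le
      have h2 : R * τ ≤ lam := by nlinarith
      nlinarith [mul_pos (sub_pos.mpr hhr) (sub_pos.mpr hσ1)]
  · -- upper bound
    show lam < R - h * (1 - τ)
    rcases lt_or_ge Y (τ * X) with hcase | hcase
    · nlinarith [hA, mul_pos (sub_pos.mpr hcase) hh, hX]
    · have h2 : lam * τ ≤ r := by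
        nlinarith [mul_le_mul_of_nonneg_right hD hτpos.le,
          mul_le_mul_of_nonneg_left hcase hrpos.le, hY]
      have h3 : lam ≤ R * τ := by nlinarith [hRτ2, hτpos]
      nlinarith [mul_pos (sub_pos.mpr hhR) (sub_pos.mpr hτ1)]
end

section
/- Let m be an odd positive integer and let 𝒞 be the order m dimension n symmetric Cauchy tensor with generating vector c ∈ ℝ^n satisfying c_i > 0 for all i. Suppose λ ∈ ℝ and x ∈ ℝ^n satisfy the Z-eigenvalue system Σ_{i_2,…,i_m=1}^n x_{i_2}⋯x_{i_m}/(c_i+c_{i_2}+⋯+c_{i_m}) = λ x_i for every i ∈ {1,…,n} and xᵀx = 1. If λ > 0 then x_i ≥ 0 for all i; if λ < 0 then x_i ≤ 0 for all i. -/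
open MeasureTheory intervalIntegral

lemma cauchy_aux_rpow_integral (s : ℝ) (hs : 0 < s) :
    (∫ u in (0:ℝ)..1, u ^ (s - 1)) = 1 / s := by
  rw [integral_rpow (Or.inl (by linarith))]
  rw [sub_add_cancel, Real.one_rpow, Real.zero_rpow hs.ne']
  ring

/-- For an odd order symmetric Cauchy tensor with positive generating
vector, a Z-eigenvector corresponding to a positive Z-eigenvalue is nonnegative, and
a Z-eigenvector corresponding to a negative Z-eigenvalue is nonpositive. -/
theorem cauchy_tensor_odd_Z_eigenvector_sign
    (m n : ℕ) (hm : 0 < m) (hmo : Odd m) (c : Fin n → ℝ)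
    (hc : ∀ i, 0 < c i)
    (lam : ℝ) (x : Fin n → ℝ)
    (hnorm : (∑ i, (x i) ^ 2) = 1)
    (heig : ∀ i : Fin n,
        (∑ t : Fin (m - 1) → Fin n, (∏ j, x (t j)) / (c i + ∑ j, c (t j)))
          = lam * x i) :
    (0 < lam → ∀ i, 0 ≤ x i) ∧ (lam < 0 → ∀ i, x i ≤ 0) := by
  have heven : Even (m - 1) := Nat.Odd.sub_odd hmo odd_one
  have key : ∀ i, 0 ≤ lam * x i := by
    intro i
    rw [← heig i]
    have hpos : ∀ t : Fin (m - 1) → Fin n, 0 < c i + ∑ j, c (t j) := by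
      intro t
      have h1 : (0:ℝ) ≤ ∑ j, c (t j) := Finset.sum_nonneg fun j _ => (hc _).le
      linarith [hc i]
    have hterm : ∀ t : Fin (m - 1) → Fin n,
        (∏ j, x (t j)) / (c i + ∑ j, c (t j))
          = ∫ u in (0:ℝ)..1, (∏ j, x (t j)) * u ^ (c i + (∑ j, c (t j)) - 1) := by
      intro t
      rw [intervalIntegral.integral_const_mul, cauchy_aux_rpow_integral _ (hpos t)]
      ring
    have hint : ∀ t ∈ (Finset.univ : Finset (Fin (m - 1) → Fin n)),
        IntervalIntegrable
          (fun u : ℝ => (∏ j, x (t j)) * u ^ (c i + (∑ j, c (t j)) - 1)) volume 0 1 :=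
      fun t _ =>
        (intervalIntegral.intervalIntegrable_rpow' (by linarith [hpos t])).const_mul _
    calc (0:ℝ)
        ≤ ∫ u in (0:ℝ)..1, ∑ t : Fin (m - 1) → Fin n,
            (∏ j, x (t j)) * u ^ (c i + (∑ j, c (t j)) - 1) := by
          apply intervalIntegral.integral_nonneg_of_ae_restrict (by norm_num)
          rw [Filter.EventuallyLE, MeasureTheory.ae_restrict_iff' measurableSet_Icc]
          have h0 : ({(0:ℝ)}ᶜ : Set ℝ) ∈ MeasureTheory.ae volume :=
            MeasureTheory.compl_mem_ae_iff.mpr (MeasureTheory.measure_singleton 0)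
          filter_upwards [h0] with u hu hmem
          have hu0 : (0:ℝ) < u := lt_of_le_of_ne hmem.1 (Ne.symm hu)
          have hrw : ∑ t : Fin (m - 1) → Fin n,
              (∏ j, x (t j)) * u ^ (c i + (∑ j, c (t j)) - 1)
              = u ^ (c i - 1) * (∑ k, x k * u ^ (c k)) ^ (m - 1) := by
            have hpow : (∑ k, x k * u ^ (c k)) ^ (m - 1)
                = ∑ t : Fin (m - 1) → Fin n, ∏ j, (x (t j) * u ^ (c (t j))) := by
              rw [← Fin.prod_const (m - 1) (∑ k, x k * u ^ (c k)),
                Finset.prod_univ_sum, Fintype.piFinset_univ]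
            rw [hpow, Finset.mul_sum]
            apply Finset.sum_congr rfl
            intro t _
            rw [Finset.prod_mul_distrib, ← Real.rpow_sum_of_pos hu0,
              show c i + (∑ j, c (t j)) - 1 = (c i - 1) + ∑ j, c (t j) by ring,
              Real.rpow_add hu0]
            ring
          rw [hrw]
          have h1 : (0:ℝ) ≤ u ^ (c i - 1) := Real.rpow_nonneg hu0.le _
          have h2 : (0:ℝ) ≤ (∑ k, x k * u ^ (c k)) ^ (m - 1) := heven.pow_nonneg _
          positivity
      _ = ∑ t : Fin (m - 1) → Fin n,
            ∫ u in (0:ℝ)..1, (∏ j, x (t j)) * u ^ (c i + (∑ j, c (t j)) - 1) :=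
          intervalIntegral.integral_finset_sum hint
      _ = ∑ t : Fin (m - 1) → Fin n, (∏ j, x (t j)) / (c i + ∑ j, c (t j)) := by
          exact Finset.sum_congr rfl fun t _ => (hterm t).symm
  constructor
  · intro hl i
    have := key i
    nlinarith
  · intro hl i
    have := key i
    nlinarith
end

section
/- Let m be an odd positive integer and let 𝒞 be the order m dimension n symmetric Cauchy tensor with generating vector c ∈ ℝ^n whose entries are positive and mutually distinct (c_i > 0 for all i, c_i ≠ c_j for i ≠ j). Then 0 is not a Z-eigenvalue of 𝒞: there is no x ∈ ℝ^n with xᵀx = 1 such that Σ_{i_2,…,i_m=1}^n x_{i_2}⋯x_{i_m}/(c_i+c_{i_2}+⋯+c_{i_m}) = 0 for every i ∈ {1,…,n}. -/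
open MeasureTheory intervalIntegral Set Filter

/-- Integral of `s ^ (a-1)` on `(0,1)` is `1/a` for `a > 0`. -/
lemma integral_rpow_sub_one {a : ℝ} (ha : 0 < a) :
    ∫ s in (0:ℝ)..1, s ^ (a - 1) = 1 / a := by
  rw [integral_rpow (Or.inl (by linarith))]
  rw [sub_add_cancel, Real.one_rpow, Real.zero_rpow (ne_of_gt ha)]
  ring

/-- If a finite generalized polynomial `∑ x j * s ^ c j` with distinct exponents vanishes
on `(0,1)`, then all coefficients vanish. -/
lemma coeffs_eq_zero {n : ℕ} (c x : Fin n → ℝ) (S : Finset (Fin n))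
    (hinj : ∀ i ∈ S, ∀ j ∈ S, i ≠ j → c i ≠ c j)
    (h : ∀ s ∈ Set.Ioo (0:ℝ) 1, ∑ j ∈ S, x j * s ^ (c j) = 0) :
    ∀ j ∈ S, x j = 0 := by
  induction S using Finset.strongInduction with
  | _ S ih =>
    intro j hj
    obtain ⟨j₀, hj₀S, hmin⟩ := S.exists_min_image c ⟨j, hj⟩
    set g : ℝ → ℝ := fun s => ∑ k ∈ S, x k * s ^ (c k - c j₀) with hg
    have hg0 : ∀ s ∈ Set.Ioo (0:ℝ) 1, g s = 0 := by
      intro s hs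
      have hspos : (0:ℝ) < s := hs.1
      have : g s = (∑ k ∈ S, x k * s ^ (c k)) * (s ^ (c j₀))⁻¹ := by
        rw [Finset.sum_mul]
        refine Finset.sum_congr rfl fun k _ => ?_
        rw [Real.rpow_sub hspos, div_eq_mul_inv, mul_assoc]
      rw [this, h s hs, zero_mul]
    have hcont : ContinuousWithinAt g (Set.Ioo 0 1) 0 := by
      apply ContinuousAt.continuousWithinAt
      have hterm : ∀ k ∈ S, ContinuousAt (fun s : ℝ => x k * s ^ (c k - c j₀)) 0 :=
        fun k hk => continuousAt_const.mul (Real.continuousAt_rpow_const 0 (c k - c j₀)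
          (Or.inr (by linarith [hmin k hk])))
      exact tendsto_finset_sum S hterm
    have hNeBot : (nhdsWithin (0:ℝ) (Set.Ioo 0 1)).NeBot := by
      rw [← mem_closure_iff_nhdsWithin_neBot, closure_Ioo one_ne_zero.symm]
      exact ⟨le_refl 0, zero_le_one⟩
    have h1 : Tendsto g (nhdsWithin (0:ℝ) (Set.Ioo 0 1)) (nhds (g 0)) := hcont
    have h2 : Tendsto g (nhdsWithin (0:ℝ) (Set.Ioo 0 1)) (nhds 0) := by
      refine Tendsto.congr' ?_ tendsto_const_nhds
      filter_upwards [self_mem_nhdsWithin] with s hs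
      exact (hg0 s hs).symm
    have hgval : g 0 = x j₀ := by
      show (∑ k ∈ S, x k * (0:ℝ) ^ (c k - c j₀)) = x j₀
      rw [Finset.sum_eq_single j₀]
      · simp [Real.rpow_zero]
      · intro k hk hkne
        have hgt : 0 < c k - c j₀ := by
          rcases lt_or_eq_of_le (hmin k hk) with h' | h'
          · linarith
          · exact absurd h'.symm (hinj k hk j₀ hj₀S hkne)
        rw [Real.zero_rpow (ne_of_gt hgt), mul_zero]
      · intro h'; exact absurd hj₀S h'
    have hxj₀ : x j₀ = 0 := by
      rw [← hgval]; exact tendsto_nhds_unique h1 h2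
    rcases eq_or_ne j j₀ with rfl | hne
    · exact hxj₀
    · have hsub : S.erase j₀ ⊂ S := Finset.erase_ssubset hj₀S
      refine ih (S.erase j₀) hsub
        (fun i hi k hk => hinj i (Finset.mem_of_mem_erase hi) k (Finset.mem_of_mem_erase hk))
        ?_ j (Finset.mem_erase.mpr ⟨hne, hj⟩)
      intro s hs
      have := h s hs
      rw [← Finset.add_sum_erase S _ hj₀S, hxj₀, zero_mul, zero_add] at this
      exact this

set_option maxHeartbeats 1000000 in
/-- An odd order symmetric Cauchy tensor whose generating vector has
positive and mutually distinct entries has no zero Z-eigenvalue. -/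
theorem cauchy_tensor_odd_no_zero_Z_eigenvalue
    (m n : ℕ) (hm : 0 < m) (hmo : Odd m) (c : Fin n → ℝ)
    (hc : ∀ i, 0 < c i)
    (hdist : ∀ i j, i ≠ j → c i ≠ c j) :
    ¬ ∃ x : Fin n → ℝ, (∑ i, (x i) ^ 2) = 1 ∧
        ∀ i : Fin n,
          (∑ t : Fin (m - 1) → Fin n, (∏ j, x (t j)) / (c i + ∑ j, c (t j))) = 0 := by
  rintro ⟨x, hx1, hx2⟩
  rcases Nat.eq_zero_or_pos n with hn | hn
  · subst hn; simp at hx1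
  have i₀ : Fin n := ⟨0, hn⟩
  by_cases hm1 : m = 1
  · subst hm1
    have := hx2 i₀
    change (∑ t : Fin 0 → Fin n, (∏ j, x (t j)) / (c i₀ + ∑ j, c (t j))) = 0 at this
    rw [Fintype.sum_subsingleton _ (fun j : Fin 0 => i₀)] at this
    simp at this
    exact absurd this (ne_of_gt (hc i₀))
  -- now m ≥ 2, k = m - 1 ≥ 1 and even
  set k := m - 1 with hk
  have hkpos : 0 < k := by omega
  have hkeven : Even k := Nat.Odd.sub_odd hmo odd_one
  set f : ℝ → ℝ := fun s => ∑ j, x j * s ^ (c j) with hf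
  -- sum of c over a tuple is nonnegative
  have hsum_nonneg : ∀ t : Fin k → Fin n, 0 ≤ ∑ j, c (t j) := fun t =>
    Finset.sum_nonneg fun j _ => (hc (t j)).le
  have hexp : ∀ t : Fin k → Fin n, (-1:ℝ) < c i₀ + (∑ j, c (t j)) - 1 := by
    intro t
    have := hc i₀
    have := hsum_nonneg t
    linarith
  set G : ℝ → ℝ := fun s =>
    ∑ t : Fin k → Fin n, (∏ j, x (t j)) * s ^ (c i₀ + (∑ j, c (t j)) - 1) with hG
  have hGint : IntervalIntegrable G volume 0 1 := by
    have h := IntervalIntegrable.sum (μ := volume) (a := 0) (b := 1)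
      (f := fun (t : Fin k → Fin n) (s : ℝ) =>
        (∏ j, x (t j)) * s ^ (c i₀ + (∑ j, c (t j)) - 1))
      Finset.univ (fun t _ => (intervalIntegrable_rpow' (hexp t)).const_mul _)
    have heq : G = ∑ t : Fin k → Fin n,
        fun s : ℝ => (∏ j, x (t j)) * s ^ (c i₀ + (∑ j, c (t j)) - 1) := by
      funext s; rw [Finset.sum_apply]
    rw [heq]; exact h
  have hGval : (∫ s in (0:ℝ)..1, G s) = 0 := by
    rw [hG, intervalIntegral.integral_finset_sum
      (fun t _ => (intervalIntegrable_rpow' (hexp t)).const_mul _)]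
    have : ∀ t : Fin k → Fin n,
        (∫ s in (0:ℝ)..1, (∏ j, x (t j)) * s ^ (c i₀ + (∑ j, c (t j)) - 1))
          = (∏ j, x (t j)) / (c i₀ + ∑ j, c (t j)) := by
      intro t
      rw [intervalIntegral.integral_const_mul,
        integral_rpow_sub_one (by have := hc i₀; have := hsum_nonneg t; linarith),
        mul_one_div]
    rw [Finset.sum_congr rfl (fun t _ => this t)]
    exact hx2 i₀
  -- key pointwise identity for s > 0
  have hkey : ∀ s : ℝ, 0 < s → G s = s ^ (c i₀ - 1) * (f s) ^ k := by
    intro s hs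
    have hfs : (f s) ^ k = ∑ t : Fin k → Fin n, ∏ j, (x (t j) * s ^ (c (t j))) := by
      rw [hf]; exact Fintype.sum_pow _ k
    rw [hfs, Finset.mul_sum, hG]
    refine Finset.sum_congr rfl fun t _ => ?_
    rw [Finset.prod_mul_distrib, ← Real.rpow_sum_of_pos hs]
    rw [← mul_assoc, mul_comm (s ^ (c i₀ - 1)) (∏ j, x (t j)), mul_assoc,
      ← Real.rpow_add hs]
    ring_nf
  have hGnonneg : 0 ≤ᵐ[volume.restrict (Set.Ioc (0:ℝ) 1)] G := by
    filter_upwards [ae_restrict_mem measurableSet_Ioc] with s hs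
    rw [hkey s hs.1]
    exact mul_nonneg (Real.rpow_nonneg hs.1.le _) (hkeven.pow_nonneg _)
  have hae : G =ᵐ[volume.restrict (Set.Ioc (0:ℝ) 1)] 0 :=
    (intervalIntegral.integral_eq_zero_iff_of_le_of_nonneg_ae zero_le_one
      hGnonneg hGint).mp hGval
  have hae' : G =ᵐ[volume.restrict (Set.Ioo (0:ℝ) 1)] 0 :=
    ae_restrict_of_ae_restrict_of_subset Set.Ioo_subset_Ioc_self hae
  have hGcont : ContinuousOn G (Set.Ioo 0 1) := by
    apply continuousOn_finset_sum
    intro t _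
    apply ContinuousOn.mul continuousOn_const
    intro s hs
    exact (Real.continuousAt_rpow_const s _ (Or.inl (ne_of_gt hs.1))).continuousWithinAt
  have hGzero : Set.EqOn G 0 (Set.Ioo 0 1) :=
    Measure.eqOn_open_of_ae_eq hae' isOpen_Ioo hGcont continuousOn_const
  have hfzero : ∀ s ∈ Set.Ioo (0:ℝ) 1, f s = 0 := by
    intro s hs
    have h0 : G s = 0 := hGzero hs
    rw [hkey s hs.1] at h0
    have hpow : (f s) ^ k = 0 := by
      have hne : s ^ (c i₀ - 1) ≠ 0 := ne_of_gt (Real.rpow_pos_of_pos hs.1 _)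
      exact (mul_eq_zero.mp h0).resolve_left hne
    exact pow_eq_zero_iff hkpos.ne' |>.mp hpow
  have hxzero : ∀ j : Fin n, x j = 0 := by
    intro j
    refine coeffs_eq_zero c x Finset.univ
      (fun i _ j' _ hne => hdist i j' hne) ?_ j (Finset.mem_univ j)
    intro s hs
    exact hfzero s hs
  have hzero : (∑ i, (x i) ^ 2) = 0 :=
    Finset.sum_eq_zero fun i _ => by rw [hxzero i]; ring
  rw [hzero] at hx1
  exact one_ne_zero hx1.symm
end

section
/- Let m be a positive integer and let 𝒞 be the order m dimension n symmetric Cauchy tensor with generating vector c ∈ ℝ^n satisfying c_i > 0 for all i. Then for every x ∈ ℝ^n, 𝒞x^m = Σ_{i_1,…,i_m=1}^n x_{i_1}⋯x_{i_m}/(c_{i_1}+⋯+c_{i_m}) = ∫₀¹ ( Σ_{i=1}^n t^{c_i − 1/m} x_i )^m dt. -/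
/-- Integral representation of the Cauchy tensor form: for a generating
vector with positive entries,
`𝒞xᵐ = ∫₀¹ (∑ᵢ t^(cᵢ − 1/m) xᵢ)ᵐ dt`. -/
theorem cauchy_tensor_integral_representation
    (m n : ℕ) (hm : 0 < m) (c : Fin n → ℝ)
    (hc : ∀ i, 0 < c i) :
    ∀ x : Fin n → ℝ,
      (∑ i : Fin m → Fin n, (∏ j, x (i j)) / (∑ j, c (i j)))
        = ∫ t in (0:ℝ)..1, (∑ i, t ^ (c i - 1 / (m : ℝ)) * x i) ^ m := by
  intro x
  haveI : NeZero m := ⟨hm.ne'⟩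
  have key : ∀ i : Fin m → Fin n, 0 < ∑ j, c (i j) := fun i =>
    Finset.sum_pos (fun j _ => hc _) ⟨⟨0, hm⟩, Finset.mem_univ _⟩
  have hprod : ∀ (t : ℝ), 0 < t → ∀ (a : Fin m → ℝ),
      ∏ j, t ^ (a j) = t ^ (∑ j, a j) := by
    intro t ht a
    simp_rw [Real.rpow_def_of_pos ht, ← Real.exp_sum, ← Finset.mul_sum]
  symm
  calc ∫ t in (0:ℝ)..1, (∑ i, t ^ (c i - 1 / (m : ℝ)) * x i) ^ m
      = ∫ t in (0:ℝ)..1, ∑ i : Fin m → Fin n,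
          (∏ j, x (i j)) * t ^ ((∑ j, c (i j)) - 1) := by
        rw [intervalIntegral.integral_of_le zero_le_one,
            intervalIntegral.integral_of_le zero_le_one]
        apply MeasureTheory.setIntegral_congr_fun measurableSet_Ioc
        intro t ht
        simp only
        rw [Fintype.sum_pow]
        refine Finset.sum_congr rfl fun i _ => ?_
        rw [Finset.prod_mul_distrib, hprod t ht.1, mul_comm]
        congr 1
        rw [Finset.sum_sub_distrib, Finset.sum_const, Finset.card_univ,
          Fintype.card_fin, nsmul_eq_mul]
        field_simp
    _ = ∑ i : Fin m → Fin n,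
          ∫ t in (0:ℝ)..1, (∏ j, x (i j)) * t ^ ((∑ j, c (i j)) - 1) := by
        apply intervalIntegral.integral_finset_sum
        intro i _
        exact (intervalIntegral.intervalIntegrable_rpow'
          (by linarith [key i])).const_mul _
    _ = ∑ i : Fin m → Fin n, (∏ j, x (i j)) / (∑ j, c (i j)) := by
        refine Finset.sum_congr rfl fun i _ => ?_
        rw [intervalIntegral.integral_const_mul,
          integral_rpow (Or.inl (by linarith [key i]))]
        rw [sub_add_cancel, Real.one_rpow, Real.zero_rpow (key i).ne', sub_zero,
          mul_one_div]
end
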